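/- arXiv:1106.5581 — 6 statements merged into one kernel-verified Lean document; each statement's English description precedes it below -/
import Mathlib

section
/- For every positive integer N, the product ∏_{j=1}^N Γ(j/2)² equals (Γ(1/2)/Γ((N+1)/2)) · 2^{-N(N-1)/2} · π^{N/2} · G(N+1), where G(N+1) = ∏_{k=1}^{N-1} k! is the Barnes G-function at integer arguments. -/
open Finset

theorem gamma_half_prod (N : ℕ) (hN : 0 < N) :
    ∏ j ∈ Finset.Icc 1 N, (Real.Gamma ((j : ℝ) / 2)) ^ 2 =
      (Real.Gamma (1 / 2) / Real.Gamma (((N : ℝ) + 1) / 2)) *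
        (2 : ℝ) ^ (-((N : ℝ) * ((N : ℝ) - 1)) / 2) *
        Real.pi ^ ((N : ℝ) / 2) *
        ∏ k ∈ Finset.range N, (Nat.factorial k : ℝ) := by
  induction N, hN using Nat.le_induction with
  | base =>
      simp only [Nat.cast_one, Finset.Icc_self, Finset.prod_singleton, Finset.range_one,
        Finset.prod_range_one, Nat.factorial_zero, Nat.cast_one, mul_one]
      rw [Real.Gamma_one_half_eq]
      norm_num
      rw [← Real.sqrt_eq_rpow, ← sq, Real.sq_sqrt Real.pi_pos.le]
  | succ n hn ih =>
      have hnpos : (0:ℝ) < ((n:ℝ)+1)/2 := by positivity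
      have hne : Real.Gamma (((n:ℝ)+1)/2) ≠ 0 := (Real.Gamma_pos_of_pos hnpos).ne'
      rw [Finset.prod_Icc_succ_top (by omega : 1 ≤ n + 1), ih,
        Finset.prod_range_succ]
      have hdup := Real.Gamma_mul_Gamma_add_half (((n:ℝ)+1)/2)
      have h2s : 2 * (((n:ℝ)+1)/2) = (n:ℝ)+1 := by ring
      rw [h2s] at hdup
      have hGn : Real.Gamma ((n:ℝ)+1) = Nat.factorial n :=
        Real.Gamma_nat_eq_factorial n
      have hsq : (Real.Gamma (((n+1:ℕ):ℝ)/2))^2 =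
          Real.Gamma (((n:ℝ)+1)/2) / Real.Gamma ((((n:ℝ)+1)+1)/2) *
            ((Nat.factorial n : ℝ) * (2:ℝ) ^ (1 - ((n:ℝ)+1)) * Real.pi ^ ((1:ℝ)/2)) := by
        have h1 : (((n:ℝ)+1)/2 + 1/2) = (((n:ℝ)+1)+1)/2 := by ring
        have hne2 : Real.Gamma ((((n:ℝ)+1)+1)/2) ≠ 0 :=
          (Real.Gamma_pos_of_pos (by positivity)).ne'
        rw [h1] at hdup
        push_cast
        rw [← Real.sqrt_eq_rpow]
        field_simp
        rw [hdup, hGn]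
      rw [hsq]
      push_cast
      have e2 : (2:ℝ) ^ (-((n:ℝ) * ((n:ℝ) - 1)) / 2) * (2:ℝ) ^ (1 - ((n:ℝ)+1)) =
          (2:ℝ) ^ (-(((n:ℝ)+1) * (((n:ℝ)+1) - 1)) / 2) := by
        rw [← Real.rpow_add two_pos]; ring_nf
      have epi : Real.pi ^ ((n:ℝ)/2) * Real.pi ^ ((1:ℝ)/2) =
          Real.pi ^ (((n:ℝ)+1)/2) := by
        rw [← Real.rpow_add Real.pi_pos]; ring_nf
      have erat : Real.Gamma (1/2) / Real.Gamma (((n:ℝ)+1)/2) *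
          (Real.Gamma (((n:ℝ)+1)/2) / Real.Gamma ((((n:ℝ)+1)+1)/2)) =
          Real.Gamma (1/2) / Real.Gamma ((((n:ℝ)+1)+1)/2) := by
        field_simp
      calc Real.Gamma (1/2) / Real.Gamma (((n:ℝ)+1)/2) *
            (2:ℝ) ^ (-((n:ℝ) * ((n:ℝ) - 1)) / 2) * Real.pi ^ ((n:ℝ)/2) *
            (∏ k ∈ Finset.range n, (Nat.factorial k : ℝ)) *
            (Real.Gamma (((n:ℝ)+1)/2) / Real.Gamma ((((n:ℝ)+1)+1)/2) *
              ((Nat.factorial n : ℝ) * (2:ℝ) ^ (1 - ((n:ℝ)+1)) * Real.pi ^ ((1:ℝ)/2)))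
          = (Real.Gamma (1/2) / Real.Gamma (((n:ℝ)+1)/2) *
              (Real.Gamma (((n:ℝ)+1)/2) / Real.Gamma ((((n:ℝ)+1)+1)/2))) *
            ((2:ℝ) ^ (-((n:ℝ) * ((n:ℝ) - 1)) / 2) * (2:ℝ) ^ (1 - ((n:ℝ)+1))) *
            (Real.pi ^ ((n:ℝ)/2) * Real.pi ^ ((1:ℝ)/2)) *
            ((∏ k ∈ Finset.range n, (Nat.factorial k : ℝ)) * (Nat.factorial n : ℝ)) := by
            ring
        _ = _ := by rw [erat, e2, epi]
end

section
/- Define P_N = Γ((N+1)/2)^N / G(N+1) for positive integers N, where G is the Barnes G-function. Then for every even integer N ≥ 4, P_N = π^{N/2} · ((N-1)^{N-1}(N-3)^{N-3}···3^3) / (2^{N²/2} · (N-2)²(N-4)⁴···2^{N-2}). -/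
open Finset

lemma prod_two_mul_add_two (m : ℕ) :
    ∏ i ∈ range m, (2*i+2) = 2^m * Nat.factorial m := by
  induction m with
  | zero => simp
  | succ n ih => rw [prod_range_succ, ih, Nat.factorial_succ]; ring

lemma key (m : ℕ) :
    (∏ i ∈ range m, (2*i+2)^(2*m - (2*i+2))) * (Nat.factorial (2*m))^(2*m)
    = (∏ i ∈ range m, (2*i+1)^(2*i+1)) * 2^(2*m^2) * (Nat.factorial m)^(2*m)
      * ∏ k ∈ range (2*m), Nat.factorial k := by
  induction m with
  | zero => simp
  | succ n ih =>
    have h1 : ∏ i ∈ range (n+1), (2*i+2)^(2*(n+1) - (2*i+2))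
        = (∏ i ∈ range n, (2*i+2)^(2*n - (2*i+2))) * (∏ i ∈ range n, (2*i+2))^2 := by
      rw [prod_range_succ]
      have : 2*(n+1) - (2*n+2) = 0 := by omega
      rw [this, pow_zero, mul_one, ← prod_pow, ← prod_mul_distrib]
      apply prod_congr rfl
      intro i hi
      have hi' : i < n := mem_range.mp hi
      have : 2*(n+1) - (2*i+2) = (2*n - (2*i+2)) + 2 := by omega
      rw [this, pow_add]
    rw [h1, prod_two_mul_add_two]
    have h2 : Nat.factorial (2*(n+1)) = 2*(n+1)*(2*n+1)*Nat.factorial (2*n) := by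
      have : 2*(n+1) = (2*n+1)+1 := by ring
      rw [this, Nat.factorial_succ, Nat.factorial_succ]; ring
    have h3 : ∏ k ∈ range (2*(n+1)), Nat.factorial k
        = (∏ k ∈ range (2*n), Nat.factorial k) * Nat.factorial (2*n)
          * ((2*n+1) * Nat.factorial (2*n)) := by
      have e : 2*(n+1) = (2*n+1)+1 := by ring
      rw [e, prod_range_succ, prod_range_succ, Nat.factorial_succ]
    have h5 : Nat.factorial (n+1) = (n+1)*Nat.factorial n := Nat.factorial_succ _
    rw [h2, h3, h5, prod_range_succ]
    set B := ∏ i ∈ range n, (2*i+2)^(2*n - (2*i+2)) with hB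
    set A := ∏ i ∈ range n, (2*i+1)^(2*i+1) with hA
    set F2 := Nat.factorial (2*n) with hF2
    set f := Nat.factorial n with hf
    set FP := ∏ k ∈ range (2*n), Nat.factorial k with hFP
    set g := n+1 with hg
    set c := 2*n+1 with hc
    clear_value B A F2 f FP g c
    have hp : (2*g*c*F2)^(2*g) = (2*g*c*F2)^(2*n) * (2*g*c*F2)^2 := by
      rw [← pow_add]; congr 1; omega
    have hc1 : c ^ c = c ^ (2*n) * c ^ 1 := by rw [← pow_add, hc]
    have hg1 : (g*f)^(2*g) = (g*f)^(2*n) * (g*f)^2 := by rw [← pow_add]; congr 1; omega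
    have h2g : 2^(2*g^2) = 2^(2*n^2) * 2^(4*n+2) := by
      rw [← pow_add]; congr 1; subst hg; ring
    calc B * (2^n*f)^2 * (2*g*c*F2)^(2*g)
        = (B * F2^(2*n)) * (2^(4*n+2) * f^2 * g^(2*n) * g^2 * c^(2*n) * c^2 * F2^2) := by
          rw [hp]; ring
      _ = (A * 2^(2*n^2) * f^(2*n) * FP)
          * (2^(4*n+2) * f^2 * g^(2*n) * g^2 * c^(2*n) * c^2 * F2^2) := by rw [ih]
      _ = A * c^c * 2^(2*g^2) * (g*f)^(2*g) * (FP * F2 * (c*F2)) := by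
          rw [hc1, hg1, h2g]; ring

lemma key2 (m : ℕ) :
    (Nat.factorial (2*m))^(2*m) * 2^(2*m^2) * (∏ i ∈ range m, (2*i+2)^(2*m - (2*i+2)))
    = (∏ i ∈ range m, (2*i+1)^(2*i+1)) * (4^m * Nat.factorial m)^(2*m)
      * ∏ k ∈ range (2*m), Nat.factorial k := by
  calc (Nat.factorial (2*m))^(2*m) * 2^(2*m^2) * (∏ i ∈ range m, (2*i+2)^(2*m - (2*i+2)))
      = ((∏ i ∈ range m, (2*i+2)^(2*m - (2*i+2))) * (Nat.factorial (2*m))^(2*m)) * 2^(2*m^2) := by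
        ring
    _ = ((∏ i ∈ range m, (2*i+1)^(2*i+1)) * 2^(2*m^2) * (Nat.factorial m)^(2*m)
          * ∏ k ∈ range (2*m), Nat.factorial k) * 2^(2*m^2) := by rw [key m]
    _ = (∏ i ∈ range m, (2*i+1)^(2*i+1)) * (4^m * Nat.factorial m)^(2*m)
          * ∏ k ∈ range (2*m), Nat.factorial k := by
        have h44 : ((4:ℕ)^m * Nat.factorial m)^(2*m) = 2^(4*m^2) * (Nat.factorial m)^(2*m) := by
          rw [mul_pow, show (4:ℕ) = 2^2 from rfl, ← pow_mul, ← pow_mul]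
          congr 2
          ring
        rw [h44]; ring

lemma oddprod (m : ℕ) (hm : 1 ≤ m) :
    ∏ i ∈ range m, (2*i+1)^(2*i+1) = ∏ i ∈ range (m-1), (2*i+3)^(2*i+3) := by
  obtain ⟨k, rfl⟩ : ∃ k, m = k+1 := ⟨m-1, by omega⟩
  rw [Finset.prod_range_succ']
  simp only [Nat.add_sub_cancel, mul_zero, zero_add, pow_one, one_pow, mul_one]
  exact prod_congr rfl fun i _ => by
    have h : 2*(i+1)+1 = 2*i+3 := by ring
    rw [h]

lemma evenprod (m : ℕ) (hm : 1 ≤ m) :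
    ∏ i ∈ range m, (2*i+2)^(2*m - (2*i+2)) = ∏ i ∈ range (m-1), (2*i+2)^(2*m - (2*i+2)) := by
  obtain ⟨k, rfl⟩ : ∃ k, m = k+1 := ⟨m-1, by omega⟩
  rw [Finset.prod_range_succ]
  have h : 2*(k+1) - (2*k+2) = 0 := by omega
  simp [h]

lemma odd_filter (m : ℕ) (hm : 2 ≤ m) :
    (Finset.Icc 3 (2*m-1)).filter (fun j => Odd j)
      = (range (m-1)).image (fun i => 2*i+3) := by
  ext j
  simp only [Finset.mem_filter, Finset.mem_Icc, Finset.mem_image, Finset.mem_range, Nat.odd_iff]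
  constructor
  · rintro ⟨⟨h1, h2⟩, h3⟩
    exact ⟨(j-3)/2, by omega, by omega⟩
  · rintro ⟨i, hi, rfl⟩
    omega

lemma even_filter (m : ℕ) (hm : 2 ≤ m) :
    (Finset.Icc 2 (2*m-2)).filter (fun j => Even j)
      = (range (m-1)).image (fun i => 2*i+2) := by
  ext j
  simp only [Finset.mem_filter, Finset.mem_Icc, Finset.mem_image, Finset.mem_range, Nat.even_iff]
  constructor
  · rintro ⟨⟨h1, h2⟩, h3⟩
    exact ⟨(j-2)/2, by omega, by omega⟩
  · rintro ⟨i, hi, rfl⟩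
    omega

lemma gamma_half (m : ℕ) :
    Real.Gamma ((m:ℝ) + 1/2)
      = Real.sqrt Real.pi * (Nat.factorial (2*m)) / (4^m * Nat.factorial m) := by
  induction m with
  | zero => simpa using Real.Gamma_one_half_eq
  | succ n ih =>
    have hne : ((n:ℝ) + 1/2) ≠ 0 := by positivity
    have h1 : ((n:ℝ)+1) + 1/2 = ((n:ℝ) + 1/2) + 1 := by ring
    have h2 : Nat.factorial (2*(n+1)) = (2*n+2)*((2*n+1)*Nat.factorial (2*n)) := by
      rw [show 2*(n+1) = (2*n+1)+1 by ring, Nat.factorial_succ, Nat.factorial_succ]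
    push_cast [h1, Real.Gamma_add_one hne, ih, h2, Nat.factorial_succ]
    have hf : (Nat.factorial n : ℝ) ≠ 0 := by positivity
    have h4 : (4:ℝ)^n ≠ 0 := by positivity
    field_simp
    ring

noncomputable def P (N : ℕ) : ℝ :=
  Real.Gamma (((N : ℝ) + 1) / 2) ^ N / ∏ k ∈ Finset.range N, (Nat.factorial k : ℝ)

lemma main_even (m : ℕ) (hm : 2 ≤ m) :
    P (2*m) = Real.pi ^ ((2*m) / 2) *
        (∏ j ∈ (Finset.Icc 3 (2*m - 1)).filter (fun j => Odd j), (j : ℝ) ^ j) /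
        (2 ^ ((2*m) ^ 2 / 2) *
          ∏ j ∈ (Finset.Icc 2 (2*m - 2)).filter (fun j => Even j), (j : ℝ) ^ (2*m - j)) := by
  have e1 : (2*m)/2 = m := by omega
  have e2 : (2*m)^2/2 = 2*m^2 := by
    rw [show (2*m)^2 = 2*(2*m^2) by ring]
    exact Nat.mul_div_cancel_left _ (by norm_num)
  rw [e1, e2]
  -- products
  have hodd : ∏ j ∈ (Finset.Icc 3 (2*m-1)).filter (fun j => Odd j), (j : ℝ) ^ j
      = ((∏ i ∈ range m, (2*i+1)^(2*i+1) : ℕ) : ℝ) := by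
    rw [odd_filter m hm, Finset.prod_image (fun a _ b _ h => by omega),
      oddprod m (by omega)]
    push_cast
    rfl
  have heven : ∏ j ∈ (Finset.Icc 2 (2*m-2)).filter (fun j => Even j), (j : ℝ) ^ (2*m-j)
      = ((∏ i ∈ range m, (2*i+2)^(2*m-(2*i+2)) : ℕ) : ℝ) := by
    rw [even_filter m hm, Finset.prod_image (fun a _ b _ h => by omega),
      evenprod m (by omega)]
    push_cast
    rfl
  have hFP : ∏ k ∈ Finset.range (2*m), (Nat.factorial k : ℝ)
      = ((∏ k ∈ range (2*m), Nat.factorial k : ℕ) : ℝ) := by push_cast; rfl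
  have harg : (((2*m : ℕ) : ℝ) + 1) / 2 = (m:ℝ) + 1/2 := by push_cast; ring
  rw [hodd, heven, P, harg, hFP, gamma_half m]
  set A := ((∏ i ∈ range m, (2*i+1)^(2*i+1) : ℕ) : ℝ) with hA
  set B := ((∏ i ∈ range m, (2*i+2)^(2*m-(2*i+2)) : ℕ) : ℝ) with hB
  set F2 := ((Nat.factorial (2*m) : ℕ) : ℝ) with hF2
  set f := ((Nat.factorial m : ℕ) : ℝ) with hf
  set FP := ((∏ k ∈ range (2*m), Nat.factorial k : ℕ) : ℝ) with hFPd
  have hkey : F2^(2*m) * 2^(2*m^2) * B = A * (4^m * f)^(2*m) * FP := by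
    simp only [hA, hB, hF2, hf, hFPd]
    exact_mod_cast key2 m
  have hBpos : 0 < B := by
    rw [show B = ((∏ i ∈ range m, (2*i+2)^(2*m-(2*i+2)) : ℕ) : ℝ) from rfl]
    positivity
  have hFPpos : 0 < FP := by
    rw [hFPd]
    have : 0 < ∏ k ∈ range (2*m), Nat.factorial k :=
      Finset.prod_pos fun k _ => Nat.factorial_pos k
    exact_mod_cast this
  have hfpos : 0 < f := by rw [hf]; exact_mod_cast Nat.factorial_pos m
  have hd1 : (4:ℝ)^m * f ≠ 0 := by positivity
  have hsq : Real.sqrt Real.pi ^ (2*m) = Real.pi ^ m := by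
    rw [pow_mul, Real.sq_sqrt Real.pi_pos.le]
  have hd2 : ((4:ℝ)^m * f)^(2*m) ≠ 0 := pow_ne_zero _ hd1
  clear_value A B F2 f FP
  rw [div_eq_div_iff (by positivity) (by positivity), div_pow, mul_pow, hsq,
    div_mul_eq_mul_div, div_eq_iff hd2]
  linear_combination Real.pi ^ m * hkey

theorem P_even_explicit (N : ℕ) (hN : 4 ≤ N) (hNe : Even N) :
    P N = Real.pi ^ (N / 2) *
        (∏ j ∈ (Finset.Icc 3 (N - 1)).filter (fun j => Odd j), (j : ℝ) ^ j) /
        (2 ^ (N ^ 2 / 2) *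
          ∏ j ∈ (Finset.Icc 2 (N - 2)).filter (fun j => Even j), (j : ℝ) ^ (N - j)) := by
  obtain ⟨m, rfl⟩ := hNe
  rw [show m + m = 2*m from by ring]
  exact main_even m (by omega)
end

section
/- Define P_N = Γ((N+1)/2)^N / G(N+1) for positive integers N. Then for every odd integer N ≥ 3, P_N = ((N-1)^{N-1}(N-3)^{N-3}···2²) / (2^{N(N-1)/2} · (N-2)²(N-4)⁴···3^{N-3}). -/
open Finset

noncomputable def AA (m : ℕ) : ℝ := ∏ j ∈ (Icc 2 (2*m)).filter (fun j => Even j), (j:ℝ)^j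
noncomputable def BB (m : ℕ) : ℝ := ∏ j ∈ (Icc 3 (2*m-1)).filter (fun j => Odd j), (j:ℝ)^(2*m+1-j)
noncomputable def DD (m : ℕ) : ℝ := ∏ j ∈ (Icc 3 (2*m+1)).filter (fun j => Odd j), (j:ℝ)
noncomputable def GG (m : ℕ) : ℝ := ∏ k ∈ range (2*m+1), (k.factorial:ℝ)

lemma oddInsert (m : ℕ) (hm : 1 ≤ m) :
    (Icc 3 (2*m+1)).filter (fun j => Odd j) = insert (2*m+1) ((Icc 3 (2*m-1)).filter (fun j => Odd j)) := by
  ext j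
  simp only [mem_filter, mem_insert, mem_Icc, Nat.odd_iff]
  omega

lemma DF (m : ℕ) : ((2*m+1).factorial : ℝ) = 2^m * m.factorial * DD m := by
  induction m with
  | zero => simp [DD, show Icc 3 1 = (∅ : Finset ℕ) by decide]
  | succ m ih =>
    have h1 : (Icc 3 (2*(m+1)+1)).filter (fun j => Odd j)
        = insert (2*m+3) ((Icc 3 (2*m+1)).filter (fun j => Odd j)) := by
      ext j
      simp only [mem_filter, mem_insert, mem_Icc, Nat.odd_iff]
      omega
    have h2 : (2*(m+1)+1).factorial = (2*m+3) * ((2*m+2) * (2*m+1).factorial) := by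
      show (2*m+3).factorial = _
      rw [Nat.factorial_succ, Nat.factorial_succ]
    have h3 : (2*m+3:ℕ) ∉ (Icc 3 (2*m+1)).filter (fun j => Odd j) := by
      simp only [mem_filter, mem_Icc, Nat.odd_iff, not_and]; omega
    rw [DD, h1, prod_insert h3, h2]
    push_cast
    rw [ih]
    unfold DD
    rw [Nat.factorial_succ]
    push_cast
    ring

lemma Dsucc (m : ℕ) (hm : 1 ≤ m) :
    DD m = (2*m+1) * ∏ j ∈ (Icc 3 (2*m-1)).filter (fun j => Odd j), (j:ℝ) := by
  rw [DD, oddInsert m hm, prod_insert (by simp only [mem_filter, mem_Icc, Nat.odd_iff, not_and]; omega)]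
  push_cast; ring

lemma Asucc (m : ℕ) : AA (m+1) = ((2*m+2:ℕ):ℝ)^(2*m+2) * AA m := by
  have h1 : (Icc 2 (2*(m+1))).filter (fun j => Even j)
      = insert (2*m+2) ((Icc 2 (2*m)).filter (fun j => Even j)) := by
    ext j
    simp only [mem_filter, mem_insert, mem_Icc, Nat.even_iff]
    omega
  rw [AA, h1, prod_insert (by simp only [mem_filter, mem_Icc, Nat.even_iff, not_and]; omega), AA]

lemma Bsucc (m : ℕ) (hm : 1 ≤ m) : BB (m+1) = DD m ^ 2 * BB m := by
  have h1 : (Icc 3 (2*(m+1)-1)).filter (fun j => Odd j)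
      = insert (2*m+1) ((Icc 3 (2*m-1)).filter (fun j => Odd j)) := by
    ext j
    simp only [mem_filter, mem_insert, mem_Icc, Nat.odd_iff]
    omega
  rw [BB, h1, prod_insert (by simp only [mem_filter, mem_Icc, Nat.odd_iff, not_and]; omega)]
  have h2 : ∀ j ∈ (Icc 3 (2*m-1)).filter (fun j => Odd j),
      (j:ℝ)^(2*(m+1)+1-j) = (j:ℝ)^(2*m+1-j) * (j:ℝ)^2 := by
    intro j hj
    simp only [mem_filter, mem_Icc] at hj
    rw [← pow_add]
    congr 1
    omega
  rw [prod_congr rfl h2, prod_mul_distrib, Dsucc m hm, prod_pow]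
  rw [BB]
  have : (2*(m+1)+1-(2*m+1)) = 2 := by omega
  rw [this]
  push_cast
  ring

lemma Gsucc (m : ℕ) : GG (m+1) = GG m * ((2*m+1).factorial : ℝ) * ((2*m+2).factorial : ℝ) := by
  have : 2*(m+1)+1 = (2*m+1) + 1 + 1 := by omega
  rw [GG, this, prod_range_succ, prod_range_succ, GG]

lemma keyP (m : ℕ) (hm : 1 ≤ m) :
    (m.factorial:ℝ)^(2*m+1) * 2^(2*m*m+m) * BB m = AA m * GG m := by
  induction m with
  | zero => omega
  | succ m ih =>
    rcases Nat.eq_or_lt_of_le hm with h | h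
    · -- m + 1 = 1, i.e. m = 0
      have hm0 : m = 0 := by omega
      subst hm0
      norm_num [AA, BB, GG, DD, show Icc 3 1 = (∅:Finset ℕ) by decide,
        show Icc 2 2 = ({2}:Finset ℕ) by decide, prod_range_succ, Nat.factorial,
        Finset.filter_singleton]
    · have hm1 : 1 ≤ m := by omega
      have IH := ih hm1
      rw [Asucc, Bsucc m hm1, Gsucc]
      have hfac : ((m+1).factorial : ℝ) = (m+1) * m.factorial := by
        rw [Nat.factorial_succ]; push_cast; ring
      have hf2 : ((2*m+2).factorial : ℝ) = (2*m+2) * ((2*m+1).factorial : ℝ) := by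
        rw [show (2*m+2) = (2*m+1)+1 from rfl, Nat.factorial_succ]; push_cast; ring
      rw [hfac, hf2, DF]
      push_cast
      have hexp : 2*(m+1)*(m+1)+(m+1) = (2*m*m+m) + (4*m+3) := by ring
      rw [hexp, mul_pow, show ((2:ℝ)*(m:ℝ)+2) = 2*((m:ℝ)+1) by ring, mul_pow]
      linear_combination ((2:ℝ)^(2*m+2) * ((m:ℝ)+1)^(2*m+2) * (2^m * (m.factorial:ℝ) * DD m) * (2*((m:ℝ)+1) * (2^m * (m.factorial:ℝ) * DD m))) * IH

theorem P_odd_explicit (N : ℕ) (hN : 3 ≤ N) (hNo : Odd N) :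
    P N = (∏ j ∈ (Finset.Icc 2 (N - 1)).filter (fun j => Even j), (j : ℝ) ^ j) /
        (2 ^ (N * (N - 1) / 2) *
          ∏ j ∈ (Finset.Icc 3 (N - 2)).filter (fun j => Odd j), (j : ℝ) ^ (N - j)) := by
  obtain ⟨m, hm⟩ := hNo
  subst hm
  have hm1 : 1 ≤ m := by omega
  have hN1 : 2*m+1-1 = 2*m := by omega
  have hN2 : 2*m+1-2 = 2*m-1 := by omega
  have hNe : (2*m+1) * (2*m) / 2 = 2*m*m+m := by
    rw [show (2*m+1)*(2*m) = 2*(2*m*m+m) by ring, Nat.mul_div_cancel_left _ (by norm_num : 0 < 2)]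
  have hGamma : Real.Gamma ((((2*m+1 : ℕ) : ℝ) + 1) / 2) = (m.factorial : ℝ) := by
    have : (((2*m+1 : ℕ) : ℝ) + 1) / 2 = (m:ℝ) + 1 := by push_cast; ring
    rw [this, Real.Gamma_nat_eq_factorial]
  rw [P, hGamma, hN1, hN2, hNe]
  have hBpos : 0 < ∏ j ∈ (Icc 3 (2*m-1)).filter (fun j => Odd j), (j:ℝ)^(2*m+1-j) := by
    apply prod_pos
    intro j hj
    simp only [mem_filter, mem_Icc] at hj
    have hj0 : 0 < j := by omega
    exact pow_pos (by exact_mod_cast hj0) _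
  have hGpos : 0 < ∏ k ∈ range (2*m+1), (k.factorial:ℝ) := by
    apply prod_pos
    intro k _
    exact_mod_cast Nat.factorial_pos k
  rw [div_eq_div_iff (ne_of_gt hGpos)
    (ne_of_gt (mul_pos (pow_pos two_pos _) hBpos))]
  have := keyP m hm1
  rw [AA, BB, GG] at this
  linear_combination this
end

section
/- As x → ∞, Γ(x+1/2)/Γ(x) = √x · (1 - 1/(8x) + O(1/x²)). -/
open Filter Asymptotics Topology

/-- The Gamma ratio `Γ(x+1/2)/Γ(x)`. -/
noncomputable def Fg (x : ℝ) : ℝ := Real.Gamma (x + 1/2) / Real.Gamma x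

lemma Fg_pos {x : ℝ} (hx : 0 < x) : 0 < Fg x :=
  div_pos (Real.Gamma_pos_of_pos (by linarith)) (Real.Gamma_pos_of_pos hx)

lemma Fg_mul {x : ℝ} (hx : 0 < x) : Fg x * Fg (x + 1/2) = x := by
  have h1 : Real.Gamma x ≠ 0 := (Real.Gamma_pos_of_pos hx).ne'
  have h2 : Real.Gamma (x + 1/2) ≠ 0 := (Real.Gamma_pos_of_pos (by linarith)).ne'
  have h3 : x + 1/2 + 1/2 = x + 1 := by ring
  have h4 : Real.Gamma (x + 1) = x * Real.Gamma x := Real.Gamma_add_one hx.ne'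
  unfold Fg
  rw [h3, h4]
  field_simp

lemma Fg_sq_le {x : ℝ} (hx : 0 < x) : Fg x ^ 2 ≤ x := by
  have key := Real.Gamma_mul_add_mul_le_rpow_Gamma_mul_rpow_Gamma (s := x) (t := x + 1)
    (a := 1/2) (b := 1/2) hx (by linarith) (by norm_num) (by norm_num) (by norm_num)
  have harg : (1/2 : ℝ) * x + (1/2 : ℝ) * (x + 1) = x + 1/2 := by ring
  rw [harg] at key
  have hgx := Real.Gamma_pos_of_pos hx
  have hgx1 := Real.Gamma_pos_of_pos (show (0:ℝ) < x + 1 by linarith)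
  rw [← Real.sqrt_eq_rpow, ← Real.sqrt_eq_rpow, ← Real.sqrt_mul hgx.le] at key
  have k2 : Real.Gamma (x + 1/2) ^ 2 ≤ Real.Gamma x * Real.Gamma (x + 1) := by
    have h := pow_le_pow_left₀ (Real.Gamma_pos_of_pos
      (show (0:ℝ) < x + 1/2 by linarith)).le key 2
    rwa [Real.sq_sqrt (by positivity)] at h
  have h4 : Real.Gamma (x + 1) = x * Real.Gamma x := Real.Gamma_add_one hx.ne'
  unfold Fg
  rw [div_pow, div_le_iff₀ (by positivity)]
  nlinarith [k2, h4]

lemma Fg_sq_ge {x : ℝ} (hx : 0 < x) : x ^ 2 ≤ Fg x ^ 2 * (x + 1/2) := by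
  have h := Fg_sq_le (show (0:ℝ) < x + 1/2 by linarith)
  have hm : Fg x ^ 2 * Fg (x + 1/2) ^ 2 = x ^ 2 := by
    rw [← mul_pow, Fg_mul hx]
  nlinarith [sq_nonneg (Fg x)]

/-- `E x = log (x^2 / (x^2 - 1/16))`. -/
noncomputable def EE (x : ℝ) : ℝ := Real.log (x ^ 2 / (x ^ 2 - 1/16))

/-- `L x = log (F x ^ 2 / (x - 1/4))`. -/
noncomputable def LL (x : ℝ) : ℝ := Real.log (Fg x ^ 2 / (x - 1/4))

lemma EE_nonneg {x : ℝ} (hx : 1 ≤ x) : 0 ≤ EE x := by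
  have h1 : (0:ℝ) < x ^ 2 - 1/16 := by nlinarith
  apply Real.log_nonneg
  rw [le_div_iff₀ h1]
  nlinarith

lemma EE_anti {a b : ℝ} (ha : 1 ≤ a) (hab : a ≤ b) : EE b ≤ EE a := by
  have h1 : (0:ℝ) < a ^ 2 - 1/16 := by nlinarith
  have h2 : (0:ℝ) < b ^ 2 - 1/16 := by nlinarith
  apply Real.log_le_log (div_pos (by nlinarith) h2)
  rw [div_le_div_iff₀ h2 h1]
  nlinarith

lemma EE_le {x : ℝ} (hx : 1 ≤ x) : EE x ≤ 1 / (8 * x ^ 2) := by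
  have h1 : (0:ℝ) < x ^ 2 - 1/16 := by nlinarith
  have h2 := Real.log_le_sub_one_of_pos (show (0:ℝ) < x ^ 2 / (x ^ 2 - 1/16) by positivity)
  have h3 : x ^ 2 / (x ^ 2 - 1/16) - 1 ≤ 1 / (8 * x ^ 2) := by
    rw [div_sub_one h1.ne', div_le_div_iff₀ h1 (by positivity)]
    nlinarith
  exact le_trans h2 h3

lemma LL_add {x : ℝ} (hx : 1 ≤ x) : LL x + LL (x + 1/2) = EE x := by
  have hx0 : (0:ℝ) < x := by linarith
  have hp : 0 < Fg x := Fg_pos hx0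
  have hp2 : 0 < Fg (x + 1/2) := Fg_pos (by linarith)
  have h14 : (0:ℝ) < x - 1/4 := by linarith
  have h14' : (0:ℝ) < x + 1/2 - 1/4 := by linarith
  have h16 : (0:ℝ) < x ^ 2 - 1/16 := by nlinarith
  have hm : Fg x ^ 2 * Fg (x + 1/2) ^ 2 = x ^ 2 := by rw [← mul_pow, Fg_mul hx0]
  unfold LL EE
  rw [← Real.log_mul (by positivity) (by positivity)]
  congr 1
  rw [div_mul_div_comm, hm]
  congr 1
  ring

lemma LL_abs_le {x : ℝ} (hx : 1 ≤ x) : |LL x| ≤ 1 / x := by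
  have hx0 : (0:ℝ) < x := by linarith
  have h14 : (0:ℝ) < x - 1/4 := by linarith
  have hub := Fg_sq_le hx0
  have hlb := Fg_sq_ge hx0
  have hp : 0 < Fg x := Fg_pos hx0
  rw [abs_le]
  constructor
  · -- lower bound
    have harg : (0:ℝ) < x ^ 2 / ((x + 1/2) * (x - 1/4)) := by positivity
    have h1 : Real.log (x ^ 2 / ((x + 1/2) * (x - 1/4))) ≤ LL x := by
      apply Real.log_le_log harg
      rw [div_le_div_iff₀ (by positivity) h14]
      nlinarith
    have h2 := Real.log_le_sub_one_of_pos (show (0:ℝ) < (x + 1/2) * (x - 1/4) / x ^ 2 by positivity)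
    have h3 : Real.log ((x + 1/2) * (x - 1/4) / x ^ 2) = - Real.log (x ^ 2 / ((x + 1/2) * (x - 1/4))) := by
      rw [← Real.log_inv, inv_div]
    have h4 : (x + 1/2) * (x - 1/4) / x ^ 2 - 1 ≤ 1 / x := by
      rw [div_sub_one (by positivity), div_le_div_iff₀ (by positivity) hx0]
      nlinarith
    rw [h3] at h2
    linarith
  · have h1 : LL x ≤ Real.log (x / (x - 1/4)) := by
      apply Real.log_le_log (by positivity)
      gcongr
    have h2 := Real.log_le_sub_one_of_pos (show (0:ℝ) < x / (x - 1/4) by positivity)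
    have h3 : x / (x - 1/4) - 1 ≤ 1 / x := by
      rw [div_sub_one h14.ne', div_le_div_iff₀ h14 hx0]
      nlinarith
    linarith

lemma LL_eq_sum {x : ℝ} (hx : 1 ≤ x) (n : ℕ) :
    LL x = (∑ j ∈ Finset.range n, (EE (x + j) - EE (x + j + 1/2))) + LL (x + n) := by
  induction n with
  | zero => simp
  | succ n ih =>
    rw [Finset.sum_range_succ]
    have hxn : (1:ℝ) ≤ x + n := by
      have : (0:ℝ) ≤ n := Nat.cast_nonneg n
      linarith
    have h1 : LL (x + n) + LL (x + n + 1/2) = EE (x + n) := LL_add hxn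
    have h2 : LL (x + n + 1/2) + LL (x + n + 1/2 + 1/2) = EE (x + n + 1/2) := LL_add (by linarith)
    have hc : x + ((n : ℝ) + 1) = x + n + 1/2 + 1/2 := by ring
    push_cast
    rw [hc]
    linarith [ih]

lemma LL_bounds {x : ℝ} (hx : 1 ≤ x) : 0 ≤ LL x ∧ LL x ≤ EE x := by
  set S : ℕ → ℝ := fun n => ∑ j ∈ Finset.range n, (EE (x + j) - EE (x + j + 1/2)) with hS
  have hxn : ∀ n : ℕ, (1:ℝ) ≤ x + n := fun n => by
    have : (0:ℝ) ≤ n := Nat.cast_nonneg n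
    linarith
  have hS_nonneg : ∀ n, 0 ≤ S n := by
    intro n
    apply Finset.sum_nonneg
    intro j _
    have := EE_anti (hxn j) (show x + j ≤ x + j + 1/2 by linarith)
    linarith
  have hS_le : ∀ n, S n ≤ EE x := by
    intro n
    have h1 : S n ≤ ∑ j ∈ Finset.range n, (EE (x + j) - EE (x + (j + 1 : ℕ))) := by
      apply Finset.sum_le_sum
      intro j _
      have : EE (x + (j + 1 : ℕ)) ≤ EE (x + j + 1/2) := by
        apply EE_anti (by linarith [hxn j])
        push_cast
        linarith
      linarith
    have h2 : ∑ j ∈ Finset.range n, (EE (x + j) - EE (x + (j + 1 : ℕ)))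
        = EE (x + (0:ℕ)) - EE (x + n) := Finset.sum_range_sub' (fun j => EE (x + j)) n
    have h3 : 0 ≤ EE (x + n) := EE_nonneg (hxn n)
    have h4 : EE (x + (0:ℕ)) = EE x := by norm_num
    linarith
  have htendL : Tendsto (fun n : ℕ => LL (x + n)) atTop (𝓝 0) := by
    have hb : Tendsto (fun n : ℕ => 1 / (x + n)) atTop (𝓝 0) := by
      have h1 : Tendsto (fun n : ℕ => x + (n : ℝ)) atTop atTop :=
        tendsto_atTop_add_const_left _ x tendsto_natCast_atTop_atTop
      have := h1.inv_tendsto_atTop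
      simp only [one_div]
      exact this
    apply squeeze_zero_norm (fun n => ?_) hb
    simpa [Real.norm_eq_abs] using LL_abs_le (hxn n)
  have hrepr : ∀ n, S n = LL x - LL (x + n) := fun n => by linarith [LL_eq_sum hx n]
  have htend : Tendsto S atTop (𝓝 (LL x)) := by
    have h : Tendsto (fun n : ℕ => LL x - LL (x + n)) atTop (𝓝 (LL x - 0)) :=
      tendsto_const_nhds.sub htendL
    rw [sub_zero] at h
    exact h.congr fun n => (hrepr n).symm
  exact ⟨ge_of_tendsto' htend hS_nonneg, le_of_tendsto' htend hS_le⟩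

lemma Fg_sq_bounds {x : ℝ} (hx : 1 ≤ x) :
    x - 1/4 ≤ Fg x ^ 2 ∧ Fg x ^ 2 * (x + 1/4) ≤ x ^ 2 := by
  obtain ⟨h0, h1⟩ := LL_bounds hx
  have hx0 : (0:ℝ) < x := by linarith
  have h14 : (0:ℝ) < x - 1/4 := by linarith
  have h16 : (0:ℝ) < x ^ 2 - 1/16 := by nlinarith
  have hp : 0 < Fg x := Fg_pos hx0
  have harg : (0:ℝ) < Fg x ^ 2 / (x - 1/4) := by positivity
  simp only [LL, EE] at h0 h1
  constructor
  · have := (Real.log_nonneg_iff harg).mp h0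
    rw [le_div_iff₀ h14] at this
    linarith
  · have h2 : Fg x ^ 2 / (x - 1/4) ≤ x ^ 2 / (x ^ 2 - 1/16) :=
      (Real.log_le_log_iff harg (by positivity)).mp h1
    rw [div_le_div_iff₀ h14 h16] at h2
    nlinarith [h2, sq_nonneg (Fg x), mul_pos hp hp]

set_option maxHeartbeats 1000000 in
theorem gamma_ratio_asymptotic :
    (fun x : ℝ => Real.Gamma (x + 1 / 2) / Real.Gamma x -
        Real.sqrt x * (1 - 1 / (8 * x))) =O[atTop]
      (fun x : ℝ => Real.sqrt x / x ^ 2) := by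
  rw [isBigO_iff]
  refine ⟨1, ?_⟩
  filter_upwards [eventually_ge_atTop (1:ℝ)] with x hx
  have hx0 : (0:ℝ) < x := by linarith
  have hFg : Real.Gamma (x + 1 / 2) / Real.Gamma x = Fg x := rfl
  rw [hFg, Real.norm_eq_abs, Real.norm_eq_abs, one_mul,
    abs_of_nonneg (by positivity : (0:ℝ) ≤ Real.sqrt x / x ^ 2), abs_le]
  obtain ⟨hl, hu⟩ := Fg_sq_bounds hx
  have hFpos : 0 < Fg x := Fg_pos hx0
  set F := Fg x with hFdef
  set s := Real.sqrt x with hsdef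
  have hs : 0 < s := Real.sqrt_pos.mpr hx0
  have hs2 : s ^ 2 = x := Real.sq_sqrt hx0.le
  set t := (1:ℝ) / x with htdef
  have ht : 0 < t := by positivity
  have hxt : x * t = 1 := by rw [htdef]; field_simp
  have ht1 : t ≤ 1 := by rw [htdef, div_le_one hx0]; linarith
  set G := Real.sqrt (x - 1/4) with hGdef
  have hG0 : 0 ≤ G := Real.sqrt_nonneg _
  have hG2 : G ^ 2 = x - 1/4 := Real.sq_sqrt (by linarith)
  set g := s * (1 - 1 / (8 * x)) with hgdef
  have hg18 : 1 / (8 * x) = t / 8 := by rw [htdef]; ring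
  have hst2 : s / x ^ 2 = s * t ^ 2 := by rw [htdef]; ring
  have hgt : g = s * (1 - t/8) := by rw [hgdef, hg18]
  have hstt : s ^ 2 * t ^ 2 = t := by linear_combination t^2 * hs2 + t * hxt
  have hg2 : g ^ 2 = x - 1/4 + t/64 := by
    rw [hgt]
    have h : (s * (1 - t/8)) ^ 2 = s^2 * (1 - t/8)^2 := by ring
    rw [h, hs2]
    linear_combination (- 1/4 + t/64) * hxt
  have hghalf : s/2 ≤ g := by
    rw [hgt]
    nlinarith [mul_nonneg hs.le (show (0:ℝ) ≤ 1/2 - t/8 by linarith)]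
  -- G ≤ F
  have hGF : G ≤ F := by
    rw [← pow_le_pow_iff_left₀ hG0 hFpos.le two_ne_zero, hG2]
    exact hl
  -- F^2 upper bound
  have key : (x - 1/4 + t/16) * (x + 1/4) = x^2 + t/64 := by
    linear_combination (1/16 : ℝ) * hxt
  have hFu2 : F ^ 2 ≤ x - 1/4 + t/16 := by
    apply le_of_mul_le_mul_right _ (show (0:ℝ) < x + 1/4 by linarith)
    rw [key]
    nlinarith [hu, ht]
  -- upper bound : F ≤ g + s*t^2
  have hup : F ≤ g + s * t ^ 2 := by
    have hBpos : (0:ℝ) ≤ g + s * t ^ 2 := by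
      nlinarith [hghalf, hs, mul_nonneg hs.le (sq_nonneg t)]
    rw [← pow_le_pow_iff_left₀ hFpos.le hBpos two_ne_zero]
    have h2g : 0 ≤ (g - s/2) * (s * t^2) :=
      mul_nonneg (by linarith) (mul_nonneg hs.le (sq_nonneg t))
    have heq : (s/2) * (s * t^2) = t/2 := by linear_combination (1/2 : ℝ) * hstt
    have hexp : (g + s*t^2)^2 = g^2 + 2*(g*(s*t^2)) + (s*t^2)^2 := by ring
    have h2g' : 0 ≤ g*(s*t^2) - (s/2)*(s*t^2) := by linarith [h2g, mul_sub_right_distrib g (s/2) (s*t^2) ▸ h2g]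
    rw [hexp]
    nlinarith [hFu2, hg2, sq_nonneg (s * t^2), h2g', heq]
  -- lower bound : g - s*t^2 ≤ G ≤ F
  have hgG : G ≤ g := by
    rw [← pow_le_pow_iff_left₀ hG0 (by nlinarith [hghalf, hs] : (0:ℝ) ≤ g) two_ne_zero,
      hG2, hg2]
    linarith
  have hkey : (g - G) * (g + G) = t/64 := by linear_combination hg2 - hG2
  have hlow : g - s * t ^ 2 ≤ G := by
    have hgGpos : (0:ℝ) < g + G := by nlinarith [hghalf, hs, hG0]
    have h1 : g - G ≤ s * t ^ 2 := by
      rw [← mul_le_mul_iff_of_pos_right hgGpos, hkey]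
      have h2 : 0 ≤ s * t^2 * (g + G - s/2) :=
        mul_nonneg (mul_nonneg hs.le (sq_nonneg t)) (by linarith)
      have heq : s * t^2 * (s/2) = t/2 := by linear_combination (1/2 : ℝ) * hstt
      have hexp : s * t^2 * (g + G) = s * t^2 * (g + G - s/2) + s * t^2 * (s/2) := by ring
      rw [hexp, heq]
      linarith [h2, ht]
    linarith
  rw [hst2]
  constructor
  · linarith [hGF, hlow]
  · linarith [hup]
end

section
/- With y = N/2, as N → ∞ through positive integers, (Γ(y+1/2)/Γ(y+1))^N = e^{-y log y} · e^{-1/4} · (1 + O(1/y)). -/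
open Filter Asymptotics Real Stirling Topology

lemma tele_hasSum (g : ℕ → ℝ) (hmono : ∀ j, g (j+1) ≤ g j)
    (hg : Tendsto g atTop (𝓝 0)) : HasSum (fun j => g j - g (j+1)) (g 0) := by
  rw [hasSum_iff_tendsto_nat_of_nonneg (fun j => sub_nonneg.2 (hmono j))]
  have : (fun n => ∑ i ∈ Finset.range n, (g i - g (i+1))) = fun n => g 0 - g n := by
    funext n; exact Finset.sum_range_sub' g n
  rw [this]
  simpa using tendsto_const_nhds.sub hg

lemma d_nonneg (m : ℕ) : 0 ≤ log (stirlingSeq (m+1)) - log (stirlingSeq (m+2)) :=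
  (log_stirlingSeq_diff_hasSum m).nonneg fun k => by positivity

lemma theta_hasSum (p : ℕ) :
    HasSum (fun j => log (stirlingSeq (p+j+1)) - log (stirlingSeq (p+j+2)))
      (log (stirlingSeq (p+1)) - log (√π)) := by
  have hnn : ∀ j, 0 ≤ log (stirlingSeq (p+j+1)) - log (stirlingSeq (p+j+2)) :=
    fun j => d_nonneg (p + j)
  rw [hasSum_iff_tendsto_nat_of_nonneg hnn]
  have key : (fun n => ∑ i ∈ Finset.range n,
      (log (stirlingSeq (p+i+1)) - log (stirlingSeq (p+i+2)))) =
      fun n => log (stirlingSeq (p+1)) - log (stirlingSeq (p+n+1)) := by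
    funext n
    have h := Finset.sum_range_sub' (fun i => log (stirlingSeq (p+i+1))) n
    rw [← h]
    apply Finset.sum_congr rfl
    intro i _
    have e : p+(i+1)+1 = p+i+2 := by omega
    rw [e]
  rw [key]
  have hlog : Tendsto (fun n => log (stirlingSeq (p+n+1))) atTop (𝓝 (log (√π))) := by
    have h1 : Tendsto (fun n : ℕ => p+n+1) atTop atTop :=
      tendsto_atTop_atTop_of_monotone (fun a b hab => by omega) (fun b => ⟨b, by omega⟩)
    exact (Real.continuousAt_log (by positivity)).tendsto.comp
      (tendsto_stirlingSeq_sqrt_pi.comp h1)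
  simpa using tendsto_const_nhds.sub hlog

lemma d_le_T (m : ℕ) : log (stirlingSeq (m+1)) - log (stirlingSeq (m+2)) ≤
    1/(12*((m:ℝ)+1)) - 1/(12*((m:ℝ)+2)) := by
  have h := log_stirlingSeq_diff_hasSum m
  set X : ℝ := 2*((m:ℝ)+1)+1 with hX
  have hX1 : (1:ℝ) < X := by simp [hX]; positivity
  have hq0 : (0:ℝ) ≤ (1/X)^2 := by positivity
  have hq1 : (1/X)^2 < 1 := by
    rw [div_pow, one_pow, div_lt_one (by positivity)]
    nlinarith
  have hg : HasSum (fun k : ℕ => ((1/X)^2/3) * ((1/X)^2)^k) (((1/X)^2/3) * (1-(1/X)^2)⁻¹) :=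
    (hasSum_geometric_of_lt_one hq0 hq1).mul_left _
  have hle : log (stirlingSeq (m+1)) - log (stirlingSeq (m+2)) ≤
      ((1/X)^2/3) * (1-(1/X)^2)⁻¹ := by
    refine hasSum_le (fun k => ?_) h hg
    have h3 : (3:ℝ) ≤ 2*(↑(k+1):ℝ)+1 := by push_cast; nlinarith [Nat.cast_nonneg (α := ℝ) k]
    push_cast
    rw [show ((1:ℝ)/(2*((m:ℝ)+1)+1)) = 1/X from rfl]
    calc (1:ℝ)/(2*((k:ℝ)+1)+1) * ((1/X)^2)^(k+1)
        ≤ (1/3) * ((1/X)^2)^(k+1) := by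
          apply mul_le_mul_of_nonneg_right _ (by positivity)
          rw [div_le_div_iff₀ (by push_cast at h3 ⊢; linarith) (by norm_num)]
          push_cast at h3 ⊢; linarith
      _ = ((1/X)^2/3) * ((1/X)^2)^k := by ring
  refine hle.trans_eq ?_
  have hm1 : ((m:ℝ)+1) ≠ 0 := by positivity
  have hm2 : ((m:ℝ)+2) ≠ 0 := by positivity
  have hXne : X ≠ 0 := by positivity
  have hXsq : X^2 - 1 ≠ 0 := by nlinarith
  rw [hX] at hXne hXsq ⊢
  field_simp
  ring_nf

lemma d_ge (m : ℕ) : (1/(2*((m:ℝ)+1)+1))^2/3 ≤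
    log (stirlingSeq (m+1)) - log (stirlingSeq (m+2)) := by
  have h := log_stirlingSeq_diff_hasSum m
  have h0 := le_hasSum h 0 (fun j _ => by positivity)
  norm_num at h0
  push_cast at h0 ⊢
  have e : (1/(2*((m:ℝ)+1)+1))^2/3 = 1/3*((2*((m:ℝ)+1)+1)^2)⁻¹ := by
    rw [div_pow]; ring
  rw [e]; exact h0

lemma T_sub_d_le (m : ℕ) : 1/(12*((m:ℝ)+1)) - 1/(12*((m:ℝ)+2)) -
      (log (stirlingSeq (m+1)) - log (stirlingSeq (m+2))) ≤
    1/(8*((m:ℝ)+1)^2) * (1/((m:ℝ)+1) - 1/((m:ℝ)+2)) := by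
  have hfirst := d_ge m
  have hm0 : (0:ℝ) ≤ (m:ℝ) := Nat.cast_nonneg m
  have e1 : 1/(12*((m:ℝ)+1)) - 1/(12*((m:ℝ)+2)) - (1/(2*((m:ℝ)+1)+1))^2/3
      = 1/(12*((m:ℝ)+1)*((m:ℝ)+2)*(2*((m:ℝ)+1)+1)^2) := by
    have h1 : ((m:ℝ)+1) ≠ 0 := by positivity
    have h2 : ((m:ℝ)+2) ≠ 0 := by positivity
    have h3 : (2*((m:ℝ)+1)+1) ≠ 0 := by positivity
    field_simp
    ring
  have e2 : 1/(8*((m:ℝ)+1)^2) * (1/((m:ℝ)+1) - 1/((m:ℝ)+2))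
      = 1/(8*((m:ℝ)+1)^3*((m:ℝ)+2)) := by
    have h1 : ((m:ℝ)+1) ≠ 0 := by positivity
    have h2 : ((m:ℝ)+2) ≠ 0 := by positivity
    field_simp
    ring
  have e3 : 1/(12*((m:ℝ)+1)*((m:ℝ)+2)*(2*((m:ℝ)+1)+1)^2)
      ≤ 1/(8*((m:ℝ)+1)^3*((m:ℝ)+2)) := by
    apply one_div_le_one_div_of_le (by positivity)
    nlinarith [sq_nonneg ((m:ℝ)+1), pow_pos (show (0:ℝ) < (m:ℝ)+1 by positivity) 3]
  linarith

lemma tendsto_aux (p : ℕ) (c : ℝ) (hc : 0 < c) :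
    Tendsto (fun j : ℕ => 1/(c*((p:ℝ)+(j:ℝ)+1))) atTop (𝓝 0) := by
  simp only [one_div]
  apply Tendsto.comp tendsto_inv_atTop_zero
  apply Tendsto.const_mul_atTop hc
  apply tendsto_atTop_add_const_right
  apply tendsto_atTop_add_const_left
  exact tendsto_natCast_atTop_atTop

lemma theta_bound (p : ℕ) :
    |log (stirlingSeq (p+1)) - log (√π) - 1/(12*((p:ℝ)+1))| ≤ 1/((p:ℝ)+1)^3 := by
  have hd := theta_hasSum p
  have hT : HasSum (fun j : ℕ => 1/(12*((p:ℝ)+(j:ℝ)+1)) - 1/(12*((p:ℝ)+(↑(j+1):ℝ)+1)))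
      (1/(12*((p:ℝ)+(0:ℕ)+1))) := by
    apply tele_hasSum (fun j : ℕ => 1/(12*((p:ℝ)+(j:ℝ)+1)))
    · intro j
      apply one_div_le_one_div_of_le (by positivity)
      push_cast; linarith
    · exact tendsto_aux p 12 (by norm_num)
  have hH : HasSum (fun j : ℕ => (1/(8*((p:ℝ)+1)^2)) * (1/((p:ℝ)+(j:ℝ)+1) - 1/((p:ℝ)+(↑(j+1):ℝ)+1)))
      ((1/(8*((p:ℝ)+1)^2)) * (1/((p:ℝ)+(0:ℕ)+1))) := by
    apply HasSum.mul_left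
    apply tele_hasSum (fun j : ℕ => 1/((p:ℝ)+(j:ℝ)+1))
    · intro j
      apply one_div_le_one_div_of_le (by positivity)
      push_cast; linarith
    · simpa using tendsto_aux p 1 one_pos
  have hsub := hT.sub hd
  have hterm_eq : ∀ j : ℕ,
      (1/(12*((p:ℝ)+(j:ℝ)+1)) - 1/(12*((p:ℝ)+(↑(j+1):ℝ)+1)))
      = 1/(12*((↑(p+j):ℝ)+1)) - 1/(12*((↑(p+j):ℝ)+2)) := by
    intro j; push_cast; ring_nf
  have hlow : 0 ≤ 1/(12*((p:ℝ)+(0:ℕ)+1)) - (log (stirlingSeq (p+1)) - log (√π)) := by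
    apply hsub.nonneg
    intro j
    rw [hterm_eq j]
    have := d_le_T (p+j)
    have e1 : p+j+1 = (p+j)+1 := rfl
    have e2 : p+j+2 = (p+j)+2 := rfl
    rw [e1, e2]
    linarith
  have hup : 1/(12*((p:ℝ)+(0:ℕ)+1)) - (log (stirlingSeq (p+1)) - log (√π))
      ≤ (1/(8*((p:ℝ)+1)^2)) * (1/((p:ℝ)+(0:ℕ)+1)) := by
    apply hasSum_le _ hsub hH
    intro j
    rw [hterm_eq j]
    have h1 := T_sub_d_le (p+j)
    have h2 : 1/(8*((↑(p+j):ℝ)+1)^2) * (1/((↑(p+j):ℝ)+1) - 1/((↑(p+j):ℝ)+2))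
        ≤ (1/(8*((p:ℝ)+1)^2)) * (1/((p:ℝ)+(j:ℝ)+1) - 1/((p:ℝ)+(↑(j+1):ℝ)+1)) := by
      have hdiffnn : (0:ℝ) ≤ 1/((↑(p+j):ℝ)+1) - 1/((↑(p+j):ℝ)+2) := by
        rw [sub_nonneg]
        apply one_div_le_one_div_of_le (by positivity)
        linarith
      have hcc : 1/(8*((↑(p+j):ℝ)+1)^2) ≤ 1/(8*((p:ℝ)+1)^2) := by
        apply one_div_le_one_div_of_le (by positivity)
        have : ((p:ℝ)+1) ≤ (↑(p+j):ℝ)+1 := by push_cast; linarith [Nat.cast_nonneg (α := ℝ) j]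
        nlinarith [Nat.cast_nonneg (α := ℝ) p, Nat.cast_nonneg (α := ℝ) (p+j)]
      have e : (1/((↑(p+j):ℝ)+1) - 1/((↑(p+j):ℝ)+2)) = (1/((p:ℝ)+(j:ℝ)+1) - 1/((p:ℝ)+(↑(j+1):ℝ)+1)) := by
        push_cast; ring_nf
      rw [← e]
      exact mul_le_mul_of_nonneg_right hcc hdiffnn
    calc _ ≤ _ := h1
      _ ≤ _ := h2
  simp only [Nat.cast_zero, add_zero] at hlow hup
  have hc3 : (1/(8*((p:ℝ)+1)^2)) * (1/((p:ℝ)+1)) ≤ 1/((p:ℝ)+1)^3 := by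
    rw [div_mul_div_comm, one_mul]
    apply one_div_le_one_div_of_le (by positivity)
    nlinarith [Nat.cast_nonneg (α := ℝ) p, sq_nonneg ((p:ℝ)+1), pow_pos (show (0:ℝ) < (p:ℝ)+1 by positivity) 3]
  have hpos3 : (0:ℝ) < 1/((p:ℝ)+1)^3 := by positivity
  rw [abs_le]
  constructor <;> linarith

lemma my_Gamma_nat_add_half (m : ℕ) :
    Real.Gamma ((m:ℝ) + 1/2) = √π * (Nat.factorial (2*m)) / (4^m * (Nat.factorial m)) := by
  induction m with
  | zero =>
    rw [show ((0:ℕ):ℝ) + 1/2 = 1/2 by norm_num, Real.Gamma_one_half_eq]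
    simp
  | succ n ih =>
    have key : Real.Gamma ((↑(n+1):ℝ) + 1/2) = ((n:ℝ) + 1/2) * Real.Gamma ((n:ℝ) + 1/2) := by
      rw [show ((↑(n+1):ℝ) + 1/2) = ((n:ℝ) + 1/2) + 1 by push_cast; ring]
      rw [Real.Gamma_add_one (by positivity)]
    rw [key, ih]
    have h4 : (4:ℝ)^(n+1) = 4 * 4^n := by ring
    rw [h4]
    have e1 : Nat.factorial (2*(n+1)) = (2*n+2) * ((2*n+1) * Nat.factorial (2*n)) := by
      rw [show 2*(n+1) = (2*n+1)+1 by ring, Nat.factorial_succ,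
        show 2*n+1 = (2*n)+1 from rfl, Nat.factorial_succ]
      try ring
    have e2 : Nat.factorial (n+1) = (n+1) * Nat.factorial n := Nat.factorial_succ n
    rw [e1, e2]
    push_cast
    have hn : ((Nat.factorial n : ℕ) : ℝ) ≠ 0 := by exact_mod_cast (Nat.factorial_pos n).ne'
    field_simp
    ring

lemma ratio_even (m : ℕ) (hm : 1 ≤ m) :
    Real.Gamma ((m:ℝ) + 1/2) / Real.Gamma ((m:ℝ) + 1) =
      √π * stirlingSeq (2*m) / (stirlingSeq m ^ 2 * √(m:ℝ)) := by
  have hmpos : (0:ℝ) < (m:ℝ) := by exact_mod_cast hm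
  have hfac : Real.Gamma ((m:ℝ) + 1) = Nat.factorial m := Real.Gamma_nat_eq_factorial m
  rw [my_Gamma_nat_add_half, hfac]
  have hsm : ((Nat.factorial m : ℕ) : ℝ) = stirlingSeq m * (√(2*(m:ℝ)) * ((m:ℝ)/exp 1)^m) := by
    rw [stirlingSeq, div_mul_cancel₀]
    positivity
  have hs2m : ((Nat.factorial (2*m) : ℕ) : ℝ) = stirlingSeq (2*m) * (√(2*(2*m:ℕ):ℝ) * (((2*m:ℕ):ℝ)/exp 1)^(2*m)) := by
    rw [stirlingSeq, div_mul_cancel₀]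
    have : (0:ℝ) < ((2*m:ℕ):ℝ) := by push_cast; positivity
    positivity
  rw [hsm, hs2m]
  have h1 : √(2*((2*m:ℕ):ℝ)) = 2 * √(m:ℝ) := by
    push_cast
    rw [show 2*(2*(m:ℝ)) = 4 * (m:ℝ) by ring, show (4:ℝ)*(m:ℝ) = 2^2 * (m:ℝ) by norm_num,
      Real.sqrt_mul (by positivity), Real.sqrt_sq (by norm_num)]
  have h2 : (((2*m:ℕ):ℝ)/exp 1)^(2*m) = 4^m * (((m:ℝ)/exp 1)^m)^2 := by
    push_cast
    rw [show (2*(m:ℝ))/exp 1 = 2 * ((m:ℝ)/exp 1) by ring, mul_pow, ← pow_mul]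
    rw [show (4:ℝ)^m = 2^(2*m) by rw [pow_mul]; norm_num]
    ring
  rw [h1, h2]
  have hsq : √(2*(m:ℝ)) ^ 2 = 2*(m:ℝ) := Real.sq_sqrt (by positivity)
  have hsqm : √(m:ℝ) * √(m:ℝ) = (m:ℝ) := Real.mul_self_sqrt (by positivity)
  have hne1 : ((m:ℝ)/exp 1)^m ≠ 0 := by positivity
  have hne2 : √(2*(m:ℝ)) ≠ 0 := by positivity
  have hne3 : √(m:ℝ) ≠ 0 := by positivity
  have hne4 : (4:ℝ)^m ≠ 0 := by positivity
  have hsmne : stirlingSeq m ≠ 0 := ne_of_gt (by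
    have h := Stirling.stirlingSeq'_pos (m-1)
    rwa [Nat.sub_add_cancel hm] at h)
  rw [div_div]
  rw [div_eq_div_iff
    (mul_ne_zero (mul_ne_zero hne4 (mul_ne_zero hsmne (mul_ne_zero hne2 hne1)))
      (mul_ne_zero hsmne (mul_ne_zero hne2 hne1)))
    (mul_ne_zero (pow_ne_zero 2 hsmne) hne3)]
  linear_combination (√π * stirlingSeq (2*m) * 2 * 4^m * (((m:ℝ)/exp 1)^m)^2 * stirlingSeq m^2) * hsqm
    - (√π * stirlingSeq (2*m) * 4^m * (((m:ℝ)/exp 1)^m)^2 * stirlingSeq m^2) * hsq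

lemma delta_bound (k : ℕ) (hk : 1 ≤ k) :
    |log (√π) + log (stirlingSeq (2*k)) - 2 * log (stirlingSeq k) + 1/(8*(k:ℝ))| ≤ 3/(k:ℝ)^3 := by
  have hk1 : (1:ℝ) ≤ (k:ℝ) := by exact_mod_cast hk
  have hkpos : (0:ℝ) < (k:ℝ) := by linarith
  have h1 := theta_bound (k-1)
  have h2 := theta_bound (2*k-1)
  have e1 : k - 1 + 1 = k := Nat.sub_add_cancel hk
  have e2 : 2*k - 1 + 1 = 2*k := Nat.sub_add_cancel (by omega)
  have ec1 : ((k-1:ℕ):ℝ) + 1 = (k:ℝ) := by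
    rw [Nat.cast_sub hk]; push_cast; ring
  have ec2 : ((2*k-1:ℕ):ℝ) + 1 = 2*(k:ℝ) := by
    rw [Nat.cast_sub (by omega : 1 ≤ 2*k)]; push_cast; ring
  rw [e1, ec1] at h1
  rw [e2, ec2] at h2
  have key : log (√π) + log (stirlingSeq (2*k)) - 2 * log (stirlingSeq k) + 1/(8*(k:ℝ))
      = (log (stirlingSeq (2*k)) - log (√π) - 1/(12*(2*(k:ℝ))))
        - 2 * (log (stirlingSeq k) - log (√π) - 1/(12*(k:ℝ))) := by
    field_simp
    ring
  rw [key]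
  have habs : |(log (stirlingSeq (2*k)) - log (√π) - 1/(12*(2*(k:ℝ))))
        - 2 * (log (stirlingSeq k) - log (√π) - 1/(12*(k:ℝ)))|
      ≤ |log (stirlingSeq (2*k)) - log (√π) - 1/(12*(2*(k:ℝ)))|
        + 2 * |log (stirlingSeq k) - log (√π) - 1/(12*(k:ℝ))| := by
    rw [sub_eq_add_neg]
    refine (abs_add_le _ _).trans ?_
    rw [abs_neg, abs_mul]
    norm_num
  refine habs.trans ?_
  calc _ ≤ 1/(2*(k:ℝ))^3 + 2 * (1/(k:ℝ)^3) := by linarith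
    _ ≤ 3/(k:ℝ)^3 := by
        have hb : 1/(2*(k:ℝ))^3 ≤ 1/(k:ℝ)^3 := by
          apply one_div_le_one_div_of_le (by positivity)
          nlinarith [pow_pos hkpos 3]
        have he : (3:ℝ)/(k:ℝ)^3 = 1/(k:ℝ)^3 + 2*(1/(k:ℝ)^3) := by ring
        rw [he]; linarith

lemma spos (m : ℕ) (hm : 1 ≤ m) : 0 < stirlingSeq m := by
  have h := Stirling.stirlingSeq'_pos (m-1)
  rwa [Nat.sub_add_cancel hm] at h

lemma log_ratio_even (m : ℕ) (hm : 1 ≤ m) :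
    log (Real.Gamma ((m:ℝ) + 1/2) / Real.Gamma ((m:ℝ) + 1)) =
      log (√π) + log (stirlingSeq (2*m)) - 2 * log (stirlingSeq m) - (1/2) * log (m:ℝ) := by
  have hmpos : (0:ℝ) < (m:ℝ) := by exact_mod_cast hm
  have hs := spos m hm
  have hs2 := spos (2*m) (by omega)
  have hpi : (0:ℝ) < √π := Real.sqrt_pos.mpr Real.pi_pos
  have hsm : (0:ℝ) < √(m:ℝ) := Real.sqrt_pos.mpr hmpos
  rw [ratio_even m hm, Real.log_div (by positivity) (by positivity),
    Real.log_mul (by positivity) (by positivity),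
    Real.log_mul (by positivity) (by positivity),
    Real.log_pow, Real.log_sqrt hmpos.le]
  push_cast
  ring

lemma even_eps (m : ℕ) (hm : 1 ≤ m) :
    |(2*(m:ℝ)) * log (Real.Gamma ((m:ℝ)+1/2) / Real.Gamma ((m:ℝ)+1))
      + (m:ℝ)*log (m:ℝ) + 1/4| ≤ 6/(m:ℝ) := by
  have hm1 : (1:ℝ) ≤ (m:ℝ) := by exact_mod_cast hm
  have hmpos : (0:ℝ) < (m:ℝ) := by linarith
  rw [log_ratio_even m hm]
  have key : (2*(m:ℝ)) * (log (√π) + log (stirlingSeq (2*m)) - 2 * log (stirlingSeq m) - (1/2) * log (m:ℝ))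
      + (m:ℝ)*log (m:ℝ) + 1/4
      = (2*(m:ℝ)) * (log (√π) + log (stirlingSeq (2*m)) - 2 * log (stirlingSeq m) + 1/(8*(m:ℝ))) := by
    field_simp
    ring
  rw [key, abs_mul]
  have hd := delta_bound m hm
  calc |2*(m:ℝ)| * |log (√π) + log (stirlingSeq (2*m)) - 2 * log (stirlingSeq m) + 1/(8*(m:ℝ))|
      ≤ (2*(m:ℝ)) * (3/(m:ℝ)^3) := by
        apply mul_le_mul _ hd (abs_nonneg _) (by positivity)
        rw [abs_of_pos (by positivity)]
    _ ≤ 6/(m:ℝ) := by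
        have he : 2*(m:ℝ)*(3/(m:ℝ)^3) = 6/(m:ℝ)^2 := by
          field_simp
          ring
        rw [he]
        apply div_le_div_of_nonneg_left (by norm_num) hmpos
        nlinarith

lemma log_ratio_odd (k : ℕ) (hk : 1 ≤ k) :
    log (Real.Gamma (k:ℝ) / Real.Gamma ((k:ℝ)+1/2)) =
      -(log (√π) + log (stirlingSeq (2*k)) - 2 * log (stirlingSeq k)) - (1/2) * log (k:ℝ) := by
  have hk1 : (1:ℝ) ≤ (k:ℝ) := by exact_mod_cast hk
  have hkpos : (0:ℝ) < (k:ℝ) := by linarith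
  have hg1 : 0 < Real.Gamma (k:ℝ) := Real.Gamma_pos_of_pos hkpos
  have hg2 : 0 < Real.Gamma ((k:ℝ)+1/2) := Real.Gamma_pos_of_pos (by linarith)
  have hg3 : 0 < Real.Gamma ((k:ℝ)+1) := Real.Gamma_pos_of_pos (by linarith)
  have hrec : Real.Gamma ((k:ℝ)+1) = (k:ℝ) * Real.Gamma (k:ℝ) :=
    Real.Gamma_add_one (by positivity)
  have expand : Real.Gamma (k:ℝ) / Real.Gamma ((k:ℝ)+1/2) =
      ((k:ℝ))⁻¹ / (Real.Gamma ((k:ℝ)+1/2) / Real.Gamma ((k:ℝ)+1)) := by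
    rw [hrec]
    field_simp
  rw [expand, Real.log_div (by positivity) (by positivity), Real.log_inv,
    log_ratio_even k hk]
  ring

lemma log_one_sub_bound (u : ℝ) (h0 : 0 < u) (h1 : u ≤ 1/2) :
    |log (1 - u) + u| ≤ 2*u^2 := by
  have hpos : 0 < 1 - u := by linarith
  have hup : log (1-u) ≤ -u := by
    have := Real.log_le_sub_one_of_pos hpos
    linarith
  have hlow : -u - 2*u^2 ≤ log (1-u) := by
    have h2 := Real.log_le_sub_one_of_pos (show (0:ℝ) < (1-u)⁻¹ by positivity)
    rw [Real.log_inv] at h2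
    have h3 : (1-u)⁻¹ - 1 = u/(1-u) := by field_simp; ring
    have h4 : u/(1-u) ≤ u + 2*u^2 := by
      rw [div_le_iff₀ hpos]
      nlinarith
    linarith
  rw [abs_le]
  constructor <;> nlinarith

lemma odd_eps (k : ℕ) (hk : 1 ≤ k) :
    |(2*(k:ℝ)-1) * log (Real.Gamma (k:ℝ) / Real.Gamma ((k:ℝ)+1/2))
      + ((k:ℝ)-1/2)*log ((k:ℝ)-1/2) + 1/4| ≤ 7/(k:ℝ) := by
  have hk1 : (1:ℝ) ≤ (k:ℝ) := by exact_mod_cast hk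
  have hkpos : (0:ℝ) < (k:ℝ) := by linarith
  set D : ℝ := log (√π) + log (stirlingSeq (2*k)) - 2 * log (stirlingSeq k) with hD
  set L : ℝ := log (1 - 1/(2*(k:ℝ))) with hL
  have hylog : log ((k:ℝ)-1/2) = log (k:ℝ) + L := by
    rw [hL, ← Real.log_mul (by positivity) (by
      have : 1/(2*(k:ℝ)) ≤ 1/2 := by
        rw [div_le_div_iff₀ (by positivity) (by norm_num)]; linarith
      intro hzero
      have : (0:ℝ) < 1 - 1/(2*(k:ℝ)) := by linarith
      linarith [hzero ▸ this])]
    congr 1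
    field_simp
  rw [log_ratio_odd k hk, hylog]
  have key : (2*(k:ℝ)-1) * (-D - (1/2) * log (k:ℝ)) + ((k:ℝ)-1/2)*(log (k:ℝ) + L) + 1/4
      = -((2*(k:ℝ)-1) * (D + 1/(8*(k:ℝ)))) + ((k:ℝ)-1/2)*(L + 1/(2*(k:ℝ))) + 1/(8*(k:ℝ)) := by
    field_simp
    ring
  rw [key]
  have hd := delta_bound k hk
  have hl := log_one_sub_bound (1/(2*(k:ℝ))) (by positivity) (by
    rw [div_le_div_iff₀ (by positivity) (by norm_num)]; linarith)
  have habs : |-((2*(k:ℝ)-1) * (D + 1/(8*(k:ℝ)))) + ((k:ℝ)-1/2)*(L + 1/(2*(k:ℝ))) + 1/(8*(k:ℝ))|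
      ≤ |(2*(k:ℝ)-1)| * |D + 1/(8*(k:ℝ))| + |(k:ℝ)-1/2| * |L + 1/(2*(k:ℝ))| + 1/(8*(k:ℝ)) := by
    refine (abs_add_le _ _).trans ?_
    have h1 : |(1:ℝ)/(8*(k:ℝ))| = 1/(8*(k:ℝ)) := abs_of_pos (by positivity)
    have h2 := abs_add_le (-((2*(k:ℝ)-1) * (D + 1/(8*(k:ℝ))))) (((k:ℝ)-1/2)*(L + 1/(2*(k:ℝ))))
    rw [abs_neg, abs_mul, abs_mul] at h2
    linarith
  refine habs.trans ?_
  have b1 : |(2*(k:ℝ)-1)| * |D + 1/(8*(k:ℝ))| ≤ 2*(k:ℝ) * (3/(k:ℝ)^3) := by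
    apply mul_le_mul _ hd (abs_nonneg _) (by positivity)
    rw [abs_of_pos (by linarith)]; linarith
  have b2 : |(k:ℝ)-1/2| * |L + 1/(2*(k:ℝ))| ≤ (k:ℝ) * (2*(1/(2*(k:ℝ)))^2) := by
    apply mul_le_mul _ hl (abs_nonneg _) (by positivity)
    rw [abs_of_pos (by linarith)]; linarith
  have e1 : 2*(k:ℝ) * (3/(k:ℝ)^3) = 6/(k:ℝ)^2 := by field_simp; ring
  have e2 : (k:ℝ) * (2*(1/(2*(k:ℝ)))^2) = 1/(2*(k:ℝ)) := by field_simp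
  rw [e1] at b1
  rw [e2] at b2
  have f1 : 6/(k:ℝ)^2 ≤ 6/(k:ℝ) := by
    apply div_le_div_of_nonneg_left (by norm_num) hkpos
    nlinarith
  have f2 : 1/(2*(k:ℝ)) ≤ (1/2)/(k:ℝ) := by
    rw [div_le_div_iff₀ (by positivity) (by positivity)]
    ring_nf
    linarith [sq_nonneg (k:ℝ)]
  have f3 : 1/(8*(k:ℝ)) ≤ (1/2)/(k:ℝ) := by
    rw [div_le_div_iff₀ (by positivity) (by positivity)]
    nlinarith
  have e3 : (7:ℝ)/(k:ℝ) = 6/(k:ℝ) + (1/2)/(k:ℝ) + (1/2)/(k:ℝ) := by ring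
  rw [e3]
  linarith

lemma master (N : ℕ) (hN : 2 ≤ N) :
    |(N:ℝ) * log (Real.Gamma ((N:ℝ)/2 + 1/2) / Real.Gamma ((N:ℝ)/2 + 1))
      + ((N:ℝ)/2)*log ((N:ℝ)/2) + 1/4| ≤ 14/((N:ℝ)/2) := by
  rcases Nat.even_or_odd N with ⟨m, hm⟩ | ⟨m, hm⟩
  · -- N = m + m
    have hm1 : 1 ≤ m := by omega
    have hmr : (1:ℝ) ≤ (m:ℝ) := by exact_mod_cast hm1
    have hc : ((N:ℝ))/2 = (m:ℝ) := by subst hm; push_cast; ring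
    have hc2 : (N:ℝ) = 2*(m:ℝ) := by subst hm; push_cast; ring
    rw [hc, hc2]
    refine (even_eps m hm1).trans ?_
    apply div_le_div_of_nonneg_right (by norm_num) (by linarith)
  · -- N = 2*m + 1
    set k := m + 1 with hk
    have hk1 : 1 ≤ k := by omega
    have hkr : (1:ℝ) ≤ (k:ℝ) := by exact_mod_cast hk1
    have hc : ((N:ℝ))/2 = (k:ℝ) - 1/2 := by subst hm; rw [hk]; push_cast; ring
    have hc2 : (N:ℝ) = 2*(k:ℝ) - 1 := by subst hm; rw [hk]; push_cast; ring
    rw [hc, hc2, show (k:ℝ)-1/2+1/2 = (k:ℝ) by ring, show (k:ℝ)-1/2+1 = (k:ℝ)+1/2 by ring]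
    refine (odd_eps k hk1).trans ?_
    rw [div_le_div_iff₀ (by linarith) (by linarith)]
    nlinarith

theorem gamma_ratio_pow_asymptotic :
    (fun N : ℕ => (Real.Gamma ((N : ℝ) / 2 + 1 / 2) / Real.Gamma ((N : ℝ) / 2 + 1)) ^ N -
        Real.exp (-((N : ℝ) / 2) * Real.log ((N : ℝ) / 2)) * Real.exp (-1 / 4)) =O[atTop]
      (fun N : ℕ =>
        Real.exp (-((N : ℝ) / 2) * Real.log ((N : ℝ) / 2)) / ((N : ℝ) / 2)) := by
  rw [isBigO_iff]
  refine ⟨56, ?_⟩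
  filter_upwards [eventually_ge_atTop 28] with N hN
  have hNr : (28:ℝ) ≤ (N:ℝ) := by exact_mod_cast hN
  set y : ℝ := (N:ℝ)/2 with hy
  have hy14 : (14:ℝ) ≤ y := by rw [hy]; linarith
  have hypos : (0:ℝ) < y := by linarith
  have hg1 : 0 < Real.Gamma (y + 1/2) := Real.Gamma_pos_of_pos (by linarith)
  have hg2 : 0 < Real.Gamma (y + 1) := Real.Gamma_pos_of_pos (by linarith)
  have hr : 0 < Real.Gamma (y + 1/2) / Real.Gamma (y + 1) := div_pos hg1 hg2
  set ε : ℝ := (N:ℝ) * log (Real.Gamma (y + 1/2) / Real.Gamma (y + 1)) + y*log y + 1/4 with hε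
  have hεb : |ε| ≤ 14/y := master N (by omega)
  have hεb1 : |ε| ≤ 1 := by
    refine hεb.trans ?_
    rw [div_le_one hypos]; linarith
  have hpow : (Real.Gamma (y + 1/2) / Real.Gamma (y + 1)) ^ N
      = Real.exp (-y * log y) * Real.exp (-1/4) * Real.exp ε := by
    rw [← Real.exp_log hr, ← Real.exp_nat_mul, ← Real.exp_add, ← Real.exp_add]
    congr 1
    rw [hε]; ring
  rw [hpow]
  have hfac : Real.exp (-y * log y) * Real.exp (-1/4) * Real.exp ε
      - Real.exp (-y * log y) * Real.exp (-1/4)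
      = Real.exp (-y * log y) * Real.exp (-1/4) * (Real.exp ε - 1) := by ring
  rw [hfac]
  rw [Real.norm_eq_abs, Real.norm_eq_abs, abs_mul, abs_mul]
  have h1 : |Real.exp (-y * log y)| = Real.exp (-y * log y) := abs_of_pos (Real.exp_pos _)
  have h2 : |Real.exp (-1/4)| = Real.exp (-1/4) := abs_of_pos (Real.exp_pos _)
  rw [h1, h2]
  have hexp1 : Real.exp (-1/4) ≤ 1 := by
    rw [show (1:ℝ) = Real.exp 0 by rw [Real.exp_zero]]
    exact Real.exp_le_exp.mpr (by norm_num)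
  have h3 : |Real.exp ε - 1| ≤ 2 * |ε| := Real.abs_exp_sub_one_le hεb1
  have h4 : |Real.exp (-y * log y) / y| = Real.exp (-y * log y) / y :=
    abs_of_pos (by positivity)
  rw [h4]
  calc Real.exp (-y * log y) * Real.exp (-1/4) * |Real.exp ε - 1|
      ≤ Real.exp (-y * log y) * 1 * (2 * (14/y)) := by
        apply mul_le_mul _ (h3.trans (by linarith)) (abs_nonneg _) (by positivity)
        apply mul_le_mul_of_nonneg_left hexp1 (Real.exp_pos _).le
    _ = 28 * (Real.exp (-y * log y) / y) := by ring
    _ ≤ 56 * (Real.exp (-y * log y) / y) := by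
        have : (0:ℝ) ≤ Real.exp (-y * log y) / y := by positivity
        linarith
end

section
/- Define P_N = Γ((N+1)/2)^N / G(N+1). Then as N → ∞, P_{N+1}/P_N = (e/4)^{(2N+1)/4} · (1 + O(1/N)). -/
open Filter Asymptotics

open Real Stirling Nat

namespace PRatio

/-- shifted log of the Stirling sequence -/
noncomputable def tS (n : ℕ) : ℝ := Real.log (stirlingSeq n) - Real.log (Real.sqrt π)

lemma d_bounds (m : ℕ) :
    1 / (12 * ((m : ℝ) + 3/2) * ((m : ℝ) + 5/2)) ≤
      Real.log (stirlingSeq (m + 1)) - Real.log (stirlingSeq (m + 2)) ∧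
    Real.log (stirlingSeq (m + 1)) - Real.log (stirlingSeq (m + 2)) ≤
      1 / (12 * ((m : ℝ) + 1) * ((m : ℝ) + 2)) := by
  have hu : ((1 : ℝ) / (2 * ((m : ℕ) + 1 : ℕ) + 1)) ^ 2 = (1 / (2 * (m : ℝ) + 3)) ^ 2 := by
    push_cast; ring
  have hS := log_stirlingSeq_diff_hasSum m
  constructor
  · have h0 : (1 : ℝ) / (2 * ((0 : ℕ) + 1 : ℕ) + 1) *
        (((1 : ℝ) / (2 * ((m : ℕ) + 1 : ℕ) + 1)) ^ 2) ^ ((0 : ℕ) + 1) ≤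
        Real.log (stirlingSeq (m + 1)) - Real.log (stirlingSeq (m + 2)) :=
      le_hasSum hS 0 (fun j _ => by positivity)
    refine le_trans ?_ h0
    rw [hu]
    have h1 : (1:ℝ) / (2 * ((0:ℕ) + 1 : ℕ) + 1) * (((1:ℝ) / (2 * (m:ℝ) + 3)) ^ 2) ^ ((0:ℕ) + 1) =
        1 / (3 * (2*(m:ℝ)+3)^2) := by
      push_cast
      field_simp
      ring
    rw [h1, div_le_div_iff₀ (by positivity) (by positivity)]
    nlinarith [show (0:ℝ) ≤ (m:ℝ) from Nat.cast_nonneg m]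
  · have hgeo : HasSum (fun k : ℕ => (1/3 : ℝ) * (((1 : ℝ) / (2 * ((m : ℕ) + 1 : ℕ) + 1)) ^ 2) ^ (k + 1))
        ((1/3 : ℝ) * ((((1 : ℝ) / (2 * ((m : ℕ) + 1 : ℕ) + 1)) ^ 2) /
          (1 - (((1 : ℝ) / (2 * ((m : ℕ) + 1 : ℕ) + 1)) ^ 2)))) := by
      have hlt : (((1 : ℝ) / (2 * ((m : ℕ) + 1 : ℕ) + 1)) ^ 2) < 1 := by
        rw [hu]
        rw [div_pow, div_lt_one (by positivity)]
        nlinarith [Nat.cast_nonneg (α := ℝ) m]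
      have := (hasSum_geometric_of_lt_one (by positivity) hlt).mul_left
        ((((1 : ℝ) / (2 * ((m : ℕ) + 1 : ℕ) + 1)) ^ 2))
      simp_rw [← _root_.pow_succ'] at this
      exact this.mul_left (1/3)
    have hle := hasSum_le (fun k => ?_) hS hgeo
    · refine le_trans hle (le_of_eq ?_)
      rw [hu]
      have hm0 : (0:ℝ) ≤ (m:ℝ) := Nat.cast_nonneg m
      have hne : 1 - ((1:ℝ) / (2 * (m:ℝ) + 3)) ^ 2 ≠ 0 := by
        rw [div_pow, one_pow]
        have : ((1:ℝ)) / (2 * (m:ℝ) + 3) ^ 2 < 1 := by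
          rw [div_lt_one (by positivity)]; nlinarith
        intro h; nlinarith [this]
      rw [div_pow, one_pow]
      have hD : (0:ℝ) < (2 * (m:ℝ) + 3) ^ 2 := by positivity
      have hsub : 1 - (1:ℝ) / (2 * (m:ℝ) + 3) ^ 2 =
          (4*((m:ℝ)+1)*((m:ℝ)+2)) / ((2 * (m:ℝ) + 3) ^ 2) := by
        field_simp
        ring
      have e1 : ((m:ℝ)+1) ≠ 0 := by positivity
      have e2 : ((m:ℝ)+2) ≠ 0 := by positivity
      rw [hsub, div_div_div_comm, div_self hD.ne', div_one]
      field_simp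
      ring
    · have : (1 : ℝ) / (2 * ((k : ℕ) + 1 : ℕ) + 1) ≤ 1/3 := by
        rw [div_le_div_iff₀ (by positivity) (by norm_num)]
        push_cast; linarith [Nat.cast_nonneg (α := ℝ) k]
      exact mul_le_mul_of_nonneg_right this (by positivity)

lemma tS_sub_bounds (n : ℕ) (hn : 1 ≤ n) : ∀ M, n ≤ M →
    1 / (12 * ((n : ℝ) + 1/2)) - 1 / (12 * ((M : ℝ) + 1/2)) ≤ tS n - tS M ∧
    tS n - tS M ≤ 1 / (12 * (n : ℝ)) - 1 / (12 * (M : ℝ)) := by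
  intro M hM
  induction M, hM using Nat.le_induction with
  | base => constructor <;> simp
  | succ M hM ih =>
    obtain ⟨m, rfl⟩ : ∃ m, M = m + 1 := ⟨M - 1, by omega⟩
    obtain ⟨hd1, hd2⟩ := d_bounds m
    have hcast : ((m + 1 : ℕ) : ℝ) = (m : ℝ) + 1 := by push_cast; ring
    have hcast2 : ((m + 1 + 1 : ℕ) : ℝ) = (m : ℝ) + 2 := by push_cast; ring
    have hm0 : (0 : ℝ) ≤ (m : ℝ) := Nat.cast_nonneg m
    constructor
    · have : tS n - tS (m + 1 + 1) = (tS n - tS (m + 1)) +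
          (Real.log (stirlingSeq (m + 1)) - Real.log (stirlingSeq (m + 2))) := by
        unfold tS; ring_nf
      rw [this, hcast2]
      have e : 1 / (12 * (((m : ℝ) + 1) + 1/2)) - 1 / (12 * (((m : ℝ) + 2) + 1/2)) =
          1 / (12 * ((m : ℝ) + 3/2) * ((m : ℝ) + 5/2)) := by
        field_simp; ring
      have := ih.1
      rw [hcast] at this
      linarith [this, hd1, e.ge]
    · have : tS n - tS (m + 1 + 1) = (tS n - tS (m + 1)) +
          (Real.log (stirlingSeq (m + 1)) - Real.log (stirlingSeq (m + 2))) := by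
        unfold tS; ring_nf
      rw [this, hcast2]
      have e : 1 / (12 * ((m : ℝ) + 1)) - 1 / (12 * ((m : ℝ) + 2)) =
          1 / (12 * ((m : ℝ) + 1) * ((m : ℝ) + 2)) := by
        field_simp; ring
      have := ih.2
      rw [hcast] at this
      linarith [this, hd2, e.le]

lemma tS_tendsto : Tendsto (fun M : ℕ => tS M) atTop (nhds 0) := by
  have h1 : Tendsto (fun M : ℕ => Real.log (stirlingSeq M)) atTop (nhds (Real.log (Real.sqrt π))) :=
    ((Real.continuousAt_log (by positivity)).tendsto).comp tendsto_stirlingSeq_sqrt_pi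
  simpa [tS, sub_self] using h1.sub (tendsto_const_nhds (x := Real.log (Real.sqrt π)))

lemma aux_tendsto (c : ℝ) (hc : 0 ≤ c) :
    Tendsto (fun M : ℕ => 1 / (12 * ((M : ℝ) + c))) atTop (nhds 0) := by
  have h : Tendsto (fun M : ℕ => 12 * ((M : ℝ) + c)) atTop atTop := by
    apply Filter.Tendsto.const_mul_atTop (by norm_num)
    exact tendsto_atTop_add_const_right _ c tendsto_natCast_atTop_atTop
  have h2 := h.inv_tendsto_atTop
  simp only [one_div]
  exact h2

lemma tS_bounds (n : ℕ) (hn : 1 ≤ n) :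
    1 / (12 * ((n : ℝ) + 1/2)) ≤ tS n ∧ tS n ≤ 1 / (12 * (n : ℝ)) := by
  constructor
  · have hlhs : Tendsto (fun M : ℕ => 1 / (12 * ((n : ℝ) + 1/2)) - 1 / (12 * ((M : ℝ) + 1/2)))
        atTop (nhds (1 / (12 * ((n : ℝ) + 1/2)))) := by
      simpa using (tendsto_const_nhds (x := 1 / (12 * ((n : ℝ) + 1/2)))).sub (aux_tendsto (1/2) (by norm_num))
    have hrhs : Tendsto (fun M : ℕ => tS n - tS M) atTop (nhds (tS n)) := by
      simpa using (tendsto_const_nhds (x := tS n)).sub tS_tendsto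
    refine le_of_tendsto_of_tendsto hlhs hrhs ?_
    filter_upwards [eventually_ge_atTop n] with M hM
    exact (tS_sub_bounds n hn M hM).1
  · have hlhs : Tendsto (fun M : ℕ => tS n - tS M) atTop (nhds (tS n)) := by
      simpa using (tendsto_const_nhds (x := tS n)).sub tS_tendsto
    have hrhs : Tendsto (fun M : ℕ => 1 / (12 * (n : ℝ)) - 1 / (12 * ((M : ℝ))))
        atTop (nhds (1 / (12 * (n : ℝ)))) := by
      simpa using (tendsto_const_nhds (x := 1 / (12 * (n : ℝ)))).sub (aux_tendsto 0 le_rfl)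
    refine le_of_tendsto_of_tendsto hlhs hrhs ?_
    filter_upwards [eventually_ge_atTop n] with M hM
    exact (tS_sub_bounds n hn M hM).2

lemma log_factorial (n : ℕ) (hn : 1 ≤ n) :
    Real.log (n ! : ℝ) = tS n + (Real.log 2 + Real.log π) / 2 + (Real.log n) / 2
      + n * Real.log n - n := by
  have hn0 : (0 : ℝ) < (n : ℝ) := by exact_mod_cast hn
  have hf := log_stirlingSeq_formula n
  have h1 : Real.log (2 * (n : ℝ)) = Real.log 2 + Real.log n :=
    Real.log_mul (by norm_num) (by positivity)
  have h2 : Real.log ((n : ℝ) / Real.exp 1) = Real.log n - 1 := by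
    rw [Real.log_div (by positivity) (Real.exp_ne_zero 1), Real.log_exp]
  have h3 : Real.log (Real.sqrt π) = Real.log π / 2 := Real.log_sqrt pi_pos.le
  have : tS n = Real.log (n ! : ℝ) - 1/2 * (Real.log 2 + Real.log n)
      - n * (Real.log n - 1) - Real.log π / 2 := by
    rw [tS, hf, h1, h2, h3]
  rw [this]; ring

lemma Gamma_half (m : ℕ) :
    Real.Gamma ((m : ℝ) + 1/2) = Real.sqrt π * (2 * m)! / (4 ^ m * m !) := by
  induction m with
  | zero =>
    rw [show ((0:ℕ):ℝ) + 1/2 = 1/2 by norm_num, Real.Gamma_one_half_eq]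
    simp
  | succ m ih =>
    have hne : ((m : ℝ) + 1/2) ≠ 0 := by positivity
    have h1 : ((m + 1 : ℕ) : ℝ) + 1/2 = ((m : ℝ) + 1/2) + 1 := by push_cast; ring
    rw [h1, Real.Gamma_add_one hne, ih]
    have h2 : (2 * (m + 1)) = (2 * m + 1) + 1 := by ring
    rw [h2, Nat.factorial_succ, Nat.factorial_succ, Nat.factorial_succ]
    have h4 : (0:ℝ) < 4 ^ m := by positivity
    have hf : (0:ℝ) < (m ! : ℝ) := by exact_mod_cast m.factorial_pos
    push_cast
    field_simp
    ring

noncomputable def Fr (N : ℕ) : ℝ :=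
  Real.Gamma (((N : ℝ) + 2) / 2) ^ (N + 1) / (Real.Gamma (((N : ℝ) + 1) / 2) ^ N * (N)!)

noncomputable def Gr (N : ℕ) : ℝ := (2 * (N : ℝ) + 1) / 4 * (1 - 2 * Real.log 2)

lemma Fr_pos (N : ℕ) : 0 < Fr N := by
  have h1 : 0 < Real.Gamma (((N : ℝ) + 2) / 2) := Real.Gamma_pos_of_pos (by positivity)
  have h2 : 0 < Real.Gamma (((N : ℝ) + 1) / 2) := Real.Gamma_pos_of_pos (by positivity)
  have h3 : (0:ℝ) < (N)! := by exact_mod_cast N.factorial_pos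
  unfold Fr; positivity

lemma ratio_eq (N : ℕ) : P (N + 1) / P N = Fr N := by
  have h2 : 0 < Real.Gamma (((N : ℝ) + 1) / 2) := Real.Gamma_pos_of_pos (by positivity)
  have hQ : (0:ℝ) < ∏ k ∈ Finset.range N, (k ! : ℝ) := by
    apply Finset.prod_pos
    intro k _
    exact_mod_cast k.factorial_pos
  have h3 : (0:ℝ) < (N)! := by exact_mod_cast N.factorial_pos
  unfold P Fr
  rw [Finset.prod_range_succ]
  have hc : (((N + 1 : ℕ) : ℝ) + 1) / 2 = ((N : ℝ) + 2) / 2 := by push_cast; ring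
  rw [hc]
  field_simp


lemma bound_even (m a b : ℝ) (hm : 1 ≤ m)
    (ha1 : 12 * m * a ≤ 1) (ha2 : 1 ≤ (12 * m + 6) * a)
    (hb1 : 24 * m * b ≤ 1) (hb2 : 1 ≤ (24 * m + 6) * b) :
    |(4 * m + 1) * a - (2 * m + 1) * b - 1/4| ≤ 1 / m := by
  have hm0 : (0 : ℝ) < m := by linarith
  have ha0 : 0 ≤ a := by nlinarith
  have hb0 : 0 ≤ b := by nlinarith
  rw [abs_le]
  constructor
  · rw [neg_le, le_div_iff₀ hm0]
    nlinarith [mul_le_mul_of_nonneg_left ha2 (mul_nonneg hm0.le (by linarith : (0:ℝ) ≤ 4*m+1)),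
      mul_le_mul_of_nonneg_left hb1 (by positivity : (0:ℝ) ≤ (2*m+1)*(12*m+6)/24),
      mul_nonneg hm0.le hb0, mul_nonneg hm0.le ha0]
  · rw [le_div_iff₀ hm0]
    nlinarith [mul_le_mul_of_nonneg_left ha1 (by linarith : (0:ℝ) ≤ 4*m+1),
      mul_le_mul_of_nonneg_left hb2 (mul_nonneg hm0.le (by linarith : (0:ℝ) ≤ 2*m+1)),
      mul_nonneg hm0.le hb0, mul_nonneg hm0.le ha0]

lemma bound_odd (p a b : ℝ) (hp : 1 ≤ p)
    (ha1 : 12 * p * a ≤ 1) (ha2 : 1 ≤ (12 * p + 6) * a)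
    (hb1 : 24 * p * b ≤ 1) (hb2 : 1 ≤ (24 * p + 6) * b) :
    |(2 * p - 1) * b - (4 * p - 1) * a + 1/4| ≤ 1 / p := by
  have hp0 : (0 : ℝ) < p := by linarith
  have ha0 : 0 ≤ a := by nlinarith
  have hb0 : 0 ≤ b := by nlinarith
  rw [abs_le]
  constructor
  · rw [neg_le, le_div_iff₀ hp0]
    nlinarith [mul_le_mul_of_nonneg_left hb2 (mul_nonneg hp0.le (by linarith : (0:ℝ) ≤ 2*p-1)),
      mul_le_mul_of_nonneg_left ha1 (by linarith : (0:ℝ) ≤ 4*p-1),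
      mul_nonneg hp0.le hb0, mul_nonneg hp0.le ha0]
  · rw [le_div_iff₀ hp0]
    nlinarith [mul_le_mul_of_nonneg_left hb1 (div_nonneg (by linarith : (0:ℝ) ≤ 2*p-1) (by norm_num : (0:ℝ) ≤ 24)),
      mul_le_mul_of_nonneg_left ha2 (mul_nonneg hp0.le (by linarith : (0:ℝ) ≤ 4*p-1)),
      mul_nonneg hp0.le hb0, mul_nonneg hp0.le ha0]

lemma log4_eq : Real.log (4:ℝ) = 2 * Real.log 2 := by
  rw [show (4:ℝ) = 2^2 by norm_num, Real.log_pow]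
  push_cast; ring

lemma eps_even (m : ℕ) (hm : 1 ≤ m) :
    Real.log (Fr (2*m)) - Gr (2*m) =
      (4*(m:ℝ)+1) * tS m - (2*(m:ℝ)+1) * tS (2*m) - 1/4 := by
  have hm0 : (0:ℝ) < m := by exact_mod_cast hm
  have hmf : (0:ℝ) < (m ! : ℝ) := by exact_mod_cast m.factorial_pos
  have h2mf : (0:ℝ) < ((2*m)! : ℝ) := by exact_mod_cast (2*m).factorial_pos
  have h4 : (0:ℝ) < (4:ℝ)^m := by positivity
  have hsp : (0:ℝ) < Real.sqrt π := by positivity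
  have hGy : Real.Gamma ((((2*m : ℕ):ℝ) + 2)/2) = (m ! : ℝ) := by
    rw [show (((2*m : ℕ):ℝ) + 2)/2 = (m:ℝ) + 1 by push_cast; ring,
      Real.Gamma_nat_eq_factorial]
  have hGx : Real.Gamma ((((2*m : ℕ):ℝ) + 1)/2) =
      Real.sqrt π * ((2*m)! : ℝ) / (4^m * (m ! : ℝ)) := by
    rw [show (((2*m : ℕ):ℝ) + 1)/2 = (m:ℝ) + 1/2 by push_cast; ring, Gamma_half]
  have hX : (0:ℝ) < Real.sqrt π * ((2*m)! : ℝ) / (4^m * (m ! : ℝ)) := by positivity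
  have hFr : Fr (2*m) = (m ! : ℝ)^(2*m+1) /
      ((Real.sqrt π * ((2*m)! : ℝ) / (4^m * (m ! : ℝ)))^(2*m) * ((2*m)! : ℝ)) := by
    rw [Fr, hGy, hGx]
  rw [hFr, Real.log_div (by positivity) (by positivity), Real.log_pow,
    Real.log_mul (by positivity) h2mf.ne', Real.log_pow,
    Real.log_div (by positivity) (by positivity),
    Real.log_mul hsp.ne' h2mf.ne', Real.log_mul h4.ne' hmf.ne',
    Real.log_pow, Real.log_sqrt pi_pos.le, log4_eq,
    log_factorial m hm, log_factorial (2*m) (by omega),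
    show ((2*m : ℕ):ℝ) = 2*(m:ℝ) by push_cast; ring,
    Real.log_mul two_ne_zero hm0.ne']
  rw [Gr]
  push_cast
  ring

lemma eps_odd (m : ℕ) :
    Real.log (Fr (2*m+1)) - Gr (2*m+1) =
      (2*(m:ℝ)+1) * tS (2*(m+1)) - (4*(m:ℝ)+3) * tS (m+1) + 1/4 := by
  have hm0 : (0:ℝ) < (m:ℝ) + 1 := by positivity
  have hmf : (0:ℝ) < (m ! : ℝ) := by exact_mod_cast m.factorial_pos
  have hpf : (0:ℝ) < ((m+1)! : ℝ) := by exact_mod_cast (m+1).factorial_pos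
  have h2pf : (0:ℝ) < ((2*(m+1))! : ℝ) := by exact_mod_cast (2*(m+1)).factorial_pos
  have h2mf : (0:ℝ) < ((2*m+1)! : ℝ) := by exact_mod_cast (2*m+1).factorial_pos
  have h4 : (0:ℝ) < (4:ℝ)^(m+1) := by positivity
  have hsp : (0:ℝ) < Real.sqrt π := by positivity
  have hGy : Real.Gamma ((((2*m+1 : ℕ):ℝ) + 2)/2) =
      Real.sqrt π * ((2*(m+1))! : ℝ) / (4^(m+1) * ((m+1)! : ℝ)) := by
    rw [show (((2*m+1 : ℕ):ℝ) + 2)/2 = (((m+1:ℕ)):ℝ) + 1/2 by push_cast; ring, Gamma_half]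
  have hGx : Real.Gamma ((((2*m+1 : ℕ):ℝ) + 1)/2) = (m ! : ℝ) := by
    rw [show (((2*m+1 : ℕ):ℝ) + 1)/2 = (m:ℝ) + 1 by push_cast; ring,
      Real.Gamma_nat_eq_factorial]
  have hX : (0:ℝ) < Real.sqrt π * ((2*(m+1))! : ℝ) / (4^(m+1) * ((m+1)! : ℝ)) := by positivity
  have hFr : Fr (2*m+1) = (Real.sqrt π * ((2*(m+1))! : ℝ) / (4^(m+1) * ((m+1)! : ℝ)))^(2*m+1+1) /
      ((m ! : ℝ)^(2*m+1) * ((2*m+1)! : ℝ)) := by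
    rw [Fr, hGy, hGx]
  have hrel1 : Real.log ((m)! : ℝ) = Real.log ((m+1)! : ℝ) - Real.log ((m:ℝ)+1) := by
    rw [Nat.factorial_succ]
    push_cast
    rw [Real.log_mul hm0.ne' hmf.ne']
    ring
  have hrel2 : Real.log ((2*m+1)! : ℝ) =
      Real.log ((2*(m+1))! : ℝ) - Real.log (2*((m:ℝ)+1)) := by
    have hf : ((2*(m+1))! : ℝ) = (2*((m:ℝ)+1)) * ((2*m+1)! : ℝ) := by
      rw [show 2*(m+1) = (2*m+1) + 1 by ring, Nat.factorial_succ]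
      push_cast; ring
    rw [hf, Real.log_mul (by positivity) h2mf.ne']
    ring
  rw [hFr, Real.log_div (by positivity) (by positivity), Real.log_pow,
    Real.log_mul (by positivity) h2mf.ne', Real.log_pow,
    Real.log_div (by positivity) (by positivity),
    Real.log_mul hsp.ne' h2pf.ne', Real.log_mul h4.ne' hpf.ne',
    Real.log_pow, Real.log_sqrt pi_pos.le, log4_eq,
    hrel1, hrel2,
    log_factorial (m+1) (by omega), log_factorial (2*(m+1)) (by omega),
    show ((2*(m+1) : ℕ):ℝ) = 2*((m:ℝ)+1) by push_cast; ring,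
    Real.log_mul two_ne_zero hm0.ne',
    show (((m+1) : ℕ):ℝ) = (m:ℝ)+1 by push_cast; ring]
  rw [Gr]
  push_cast
  ring

lemma tS_mul_bounds (n : ℕ) (hn : 1 ≤ n) :
    12 * (n:ℝ) * tS n ≤ 1 ∧ 1 ≤ (12 * (n:ℝ) + 6) * tS n := by
  have hn0 : (0:ℝ) < n := by exact_mod_cast hn
  obtain ⟨h1, h2⟩ := tS_bounds n hn
  constructor
  · have := (le_div_iff₀ (by positivity : (0:ℝ) < 12 * (n:ℝ))).mp h2
    linarith [this]
  · have := (div_le_iff₀ (by positivity : (0:ℝ) < 12 * ((n:ℝ) + 1/2))).mp h1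
    nlinarith [this]

lemma eps_bound (N : ℕ) (hN : 1 ≤ N) : |Real.log (Fr N) - Gr N| ≤ 2 / (N:ℝ) := by
  have hN0 : (0:ℝ) < N := by exact_mod_cast hN
  rcases Nat.even_or_odd N with ⟨m, hm⟩ | ⟨m, hm⟩
  · -- N = 2m
    have hm1 : 1 ≤ m := by omega
    have hm0 : (0:ℝ) < m := by exact_mod_cast hm1
    have hNm : N = 2*m := by omega
    subst hNm
    rw [eps_even m hm1]
    obtain ⟨ha1, ha2⟩ := tS_mul_bounds m hm1
    obtain ⟨hb1, hb2⟩ := tS_mul_bounds (2*m) (by omega)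
    have hb1' : 24 * (m:ℝ) * tS (2*m) ≤ 1 := by
      have : ((2*m:ℕ):ℝ) = 2*(m:ℝ) := by push_cast; ring
      rw [this] at hb1; linarith [hb1]
    have hb2' : 1 ≤ (24 * (m:ℝ) + 6) * tS (2*m) := by
      have : ((2*m:ℕ):ℝ) = 2*(m:ℝ) := by push_cast; ring
      rw [this] at hb2; linarith [hb2]
    have := bound_even (m:ℝ) (tS m) (tS (2*m)) (by exact_mod_cast hm1) ha1 ha2 hb1' hb2'
    have h2N : 1 / (m:ℝ) = 2 / ((2*m : ℕ):ℝ) := by push_cast; field_simp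
    rwa [h2N] at this
  · -- N = 2m+1
    have hNm : N = 2*m+1 := by omega
    subst hNm
    rw [eps_odd m]
    have hp1 : 1 ≤ m + 1 := by omega
    have hp0 : (0:ℝ) < (m:ℝ) + 1 := by positivity
    obtain ⟨ha1, ha2⟩ := tS_mul_bounds (m+1) hp1
    obtain ⟨hb1, hb2⟩ := tS_mul_bounds (2*(m+1)) (by omega)
    have hc : ((m+1:ℕ):ℝ) = (m:ℝ)+1 := by push_cast; ring
    have hc2 : ((2*(m+1):ℕ):ℝ) = 2*((m:ℝ)+1) := by push_cast; ring
    rw [hc] at ha1 ha2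
    rw [hc2] at hb1 hb2
    have hb1' : 24 * ((m:ℝ)+1) * tS (2*(m+1)) ≤ 1 := by linarith [hb1]
    have hb2' : 1 ≤ (24 * ((m:ℝ)+1) + 6) * tS (2*(m+1)) := by linarith [hb2]
    have key := bound_odd ((m:ℝ)+1) (tS (m+1)) (tS (2*(m+1)))
      (by linarith [Nat.cast_nonneg (α := ℝ) m]) ha1 ha2 hb1' hb2'
    have heq : (2*((m:ℝ)+1) - 1) * tS (2*(m+1)) - (4*((m:ℝ)+1) - 1) * tS (m+1) + 1/4 =
        (2*(m:ℝ)+1) * tS (2*(m+1)) - (4*(m:ℝ)+3) * tS (m+1) + 1/4 := by ring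
    rw [heq] at key
    refine key.trans ?_
    rw [div_le_div_iff₀ hp0 (by push_cast; positivity)]
    push_cast
    nlinarith [Nat.cast_nonneg (α := ℝ) m]

end PRatio


theorem P_ratio_asymptotic :
    (fun N : ℕ => P (N + 1) / P N -
        (Real.exp 1 / 4) ^ ((2 * (N : ℝ) + 1) / 4)) =O[atTop]
      (fun N : ℕ => (Real.exp 1 / 4) ^ ((2 * (N : ℝ) + 1) / 4) / (N : ℝ)) := by
  rw [isBigO_iff]
  refine ⟨4, ?_⟩
  filter_upwards [eventually_ge_atTop 2] with N hN2
  have hN1 : 1 ≤ N := by omega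
  have hN0 : (0:ℝ) < N := by exact_mod_cast hN1
  set g : ℝ := (Real.exp 1 / 4) ^ ((2 * (N : ℝ) + 1) / 4) with hgdef
  have hgpos : 0 < g := by
    apply Real.rpow_pos_of_pos
    positivity
  have hg : g = Real.exp (PRatio.Gr N) := by
    rw [hgdef, Real.rpow_def_of_pos (by positivity)]
    congr 1
    rw [Real.log_div (Real.exp_ne_zero 1) (by norm_num), Real.log_exp, PRatio.log4_eq]
    rw [PRatio.Gr]
    ring
  set ε : ℝ := Real.log (PRatio.Fr N) - PRatio.Gr N with hεdef
  have hεb : |ε| ≤ 2 / (N:ℝ) := PRatio.eps_bound N hN1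
  have hε1 : |ε| ≤ 1 := by
    refine hεb.trans ?_
    rw [div_le_one hN0]
    exact_mod_cast hN2
  have hFr : PRatio.Fr N = g * Real.exp ε := by
    rw [hg, ← Real.exp_add, hεdef]
    rw [show PRatio.Gr N + (Real.log (PRatio.Fr N) - PRatio.Gr N) = Real.log (PRatio.Fr N) by ring]
    rw [Real.exp_log (PRatio.Fr_pos N)]
  have hmain : P (N + 1) / P N - g = g * (Real.exp ε - 1) := by
    rw [PRatio.ratio_eq N, hFr]
    ring
  rw [hmain]
  rw [Real.norm_eq_abs, Real.norm_eq_abs, abs_mul, abs_of_pos hgpos]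
  have h1 : |Real.exp ε - 1| ≤ 2 * |ε| := Real.abs_exp_sub_one_le hε1
  have h2 : |Real.exp ε - 1| ≤ 4 / (N:ℝ) := by
    refine h1.trans ?_
    calc 2 * |ε| ≤ 2 * (2 / (N:ℝ)) := by linarith [hεb]
    _ = 4 / (N:ℝ) := by ring
  have h3 : |g / (N:ℝ)| = g / (N:ℝ) := abs_of_pos (by positivity)
  rw [h3]
  calc g * |Real.exp ε - 1| ≤ g * (4 / (N:ℝ)) := by
        exact mul_le_mul_of_nonneg_left h2 hgpos.le
  _ = 4 * (g / (N:ℝ)) := by ring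
end
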